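/- arXiv:2411.11447 — 3 statements merged into one kernel-verified Lean document; each statement's English description precedes it below -/
import Mathlib

section
/- For any partition μ with at most n parts and any positive integer r, the product of the power sum symmetric polynomial p_r(x_1,...,x_n) with the Schur polynomial s_μ(x_1,...,x_n) equals the sum over all partitions λ ⊇ μ such that λ/μ is a border strip of size r of (-1)^{ht(λ/μ)} s_λ(x_1,...,x_n), where ht(λ/μ) is one less than the number of nonempty rows of λ/μ. -/
open scoped BigOperators

noncomputable section

/-- An integer partition: a weakly decreasing, eventually zero sequence of naturals. -/
structure IntPartition where
  part : ℕ → ℕ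
  antitone : ∀ i j, i ≤ j → part j ≤ part i
  finite : ∃ N, ∀ i, N ≤ i → part i = 0

namespace IntPartition

instance : LE IntPartition := ⟨fun μ ν => ∀ i, μ.part i ≤ ν.part i⟩

/-- The number of nonzero parts of a partition. -/
def len (μ : IntPartition) : ℕ :=
  Nat.find (p := fun N => μ.part N = 0)
    (by obtain ⟨N, hN⟩ := μ.finite; exact ⟨N, hN N le_rfl⟩)

/-- The size `|μ|` of a partition. -/
def size (μ : IntPartition) : ℕ := ∑ i ∈ Finset.range μ.len, μ.part i

/-- The number of boxes of the skew shape `ν/μ`. -/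
def skewSize (ν μ : IntPartition) : ℕ := ν.size - μ.size

/-- One less than the number of nonempty rows of `ν/μ`. -/
def height (μ ν : IntPartition) : ℕ :=
  (((Finset.range ν.len).filter (fun i => μ.part i < ν.part i)).card) - 1

/-- The set of boxes of the skew diagram `ν/μ` (rows and columns indexed from 0). -/
def cells (μ ν : IntPartition) : Set (ℕ × ℕ) :=
  {c | μ.part c.1 ≤ c.2 ∧ c.2 < ν.part c.1}

/-- Two boxes are adjacent if they share a common side. -/
def Adj (a b : ℕ × ℕ) : Prop :=
  (a.1 = b.1 ∧ (a.2 + 1 = b.2 ∨ b.2 + 1 = a.2)) ∨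
  (a.2 = b.2 ∧ (a.1 + 1 = b.1 ∨ b.1 + 1 = a.1))

/-- A set of boxes is connected if any two of its boxes are joined by a path of
adjacent boxes within the set. -/
def ConnectedIn (S : Set (ℕ × ℕ)) : Prop :=
  ∀ a ∈ S, ∀ b ∈ S,
    Relation.ReflTransGen (fun u v => u ∈ S ∧ v ∈ S ∧ Adj u v) a b

/-- `ν/μ` is a border strip with `r` boxes: connected and with no 2×2 block. -/
def IsBorderStrip (μ ν : IntPartition) (r : ℕ) : Prop :=
  μ ≤ ν ∧ skewSize ν μ = r ∧ ConnectedIn (cells μ ν) ∧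
    ∀ i j : ℕ, ¬ ((i, j) ∈ cells μ ν ∧ (i + 1, j) ∈ cells μ ν ∧
      (i, j + 1) ∈ cells μ ν ∧ (i + 1, j + 1) ∈ cells μ ν)

/-- `ν/μ` is a vertical strip with `r` boxes (at most one box per row). -/
def IsVerticalStrip (μ ν : IntPartition) (r : ℕ) : Prop :=
  μ ≤ ν ∧ skewSize ν μ = r ∧ ∀ i, ν.part i ≤ μ.part i + 1

/-- `ν/μ` is a horizontal strip with `r` boxes (at most one box per column). -/
def IsHorizontalStrip (μ ν : IntPartition) (r : ℕ) : Prop :=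
  μ ≤ ν ∧ skewSize ν μ = r ∧ ∀ i, ν.part (i + 1) ≤ μ.part i

/-- The conjugate partition. -/
def conj (μ : IntPartition) : IntPartition where
  part j := ((Finset.range μ.len).filter (fun i => j < μ.part i)).card
  antitone := by
    intro i j hij
    apply Finset.card_le_card
    intro a ha
    simp only [Finset.mem_filter] at ha ⊢
    exact ⟨ha.1, lt_of_le_of_lt hij ha.2⟩
  finite := ⟨μ.part 0, by
    intro j hj
    simp only [Finset.card_eq_zero, Finset.filter_eq_empty_iff]
    intro a _
    have := μ.antitone 0 a (Nat.zero_le a)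
    omega⟩

end IntPartition

namespace IntPartition

theorem ext' {μ ν : IntPartition} (h : ∀ i, μ.part i = ν.part i) : μ = ν := by
  cases μ; cases ν; simp only [mk.injEq]; exact funext h

theorem part_len (μ : IntPartition) : μ.part μ.len = 0 := by
  have := Nat.find_spec (p := fun N => μ.part N = 0)
    (by obtain ⟨N, hN⟩ := μ.finite; exact ⟨N, hN N le_rfl⟩)
  exact this

theorem part_eq_zero (μ : IntPartition) {i : ℕ} (h : μ.len ≤ i) : μ.part i = 0 :=
  Nat.le_zero.mp (μ.part_len ▸ μ.antitone _ _ h)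

theorem part_pos (μ : IntPartition) {i : ℕ} (h : i < μ.len) : 0 < μ.part i := by
  have := Nat.find_min (p := fun N => μ.part N = 0)
    (by obtain ⟨N, hN⟩ := μ.finite; exact ⟨N, hN N le_rfl⟩) h
  omega

theorem lt_len (μ : IntPartition) {i : ℕ} (h : 0 < μ.part i) : i < μ.len := by
  by_contra hc; push_neg at hc; have := μ.part_eq_zero hc; omega

theorem size_eq (μ : IntPartition) {M : ℕ} (h : μ.len ≤ M) :
    μ.size = ∑ i ∈ Finset.range M, μ.part i := by
  rw [size, ← Finset.sum_range_add_sum_Ico _ h]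
  have : ∑ i ∈ Finset.Ico μ.len M, μ.part i = 0 :=
    Finset.sum_eq_zero fun i hi => μ.part_eq_zero (Finset.mem_Ico.mp hi).1
  omega

/-- Explicit description of a border strip occupying rows `a..b`. -/
def StripData (μ ν : IntPartition) (a b r : ℕ) : Prop :=
  a ≤ b ∧ (∀ i, i < a → ν.part i = μ.part i) ∧ (∀ i, b < i → ν.part i = μ.part i) ∧
  (∀ i, a ≤ i → i ≤ b → μ.part i < ν.part i) ∧
  (∀ i, a ≤ i → i < b → ν.part (i + 1) = μ.part i + 1) ∧
  ν.part a + b = μ.part b + a + r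

theorem StripData.le {μ ν : IntPartition} {a b r : ℕ} (h : StripData μ ν a b r) : μ ≤ ν := by
  obtain ⟨hab, hlo, hhi, hin, _, _⟩ := h
  intro i
  rcases lt_or_ge i a with h1 | h1
  · exact (hlo i h1).ge
  rcases le_or_gt i b with h2 | h2
  · exact (hin i h1 h2).le
  · exact (hhi i h2).ge

theorem StripData.row_iff {μ ν : IntPartition} {a b r : ℕ} (h : StripData μ ν a b r) (i : ℕ) :
    μ.part i < ν.part i ↔ a ≤ i ∧ i ≤ b := by
  obtain ⟨hab, hlo, hhi, hin, _, _⟩ := h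
  constructor
  · intro hi
    constructor
    · by_contra hc; push_neg at hc; rw [hlo i hc] at hi; omega
    · by_contra hc; push_neg at hc; rw [hhi i hc] at hi; omega
  · intro ⟨h1, h2⟩; exact hin i h1 h2

theorem strip_sum {μ ν : IntPartition} {a b : ℕ} (hab : a ≤ b)
    (hmid : ∀ i, a ≤ i → i < b → ν.part (i + 1) = μ.part i + 1) :
    ∑ i ∈ Finset.Icc a b, ν.part i + (μ.part b + a) =
      ∑ i ∈ Finset.Icc a b, μ.part i + (ν.part a + b) := by
  induction b, hab using Nat.le_induction with
  | base => simp; omega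
  | succ b hab ih =>
    have h1 : Finset.Icc a (b + 1) = insert (b + 1) (Finset.Icc a b) := by
      ext x; simp only [Finset.mem_insert, Finset.mem_Icc]; omega
    have hnot : b + 1 ∉ Finset.Icc a b := by simp
    rw [h1, Finset.sum_insert hnot, Finset.sum_insert hnot]
    have ihh := ih (fun i h1 h2 => hmid i h1 (by omega))
    have := hmid b hab (by omega)
    omega

theorem len_le_len {μ ν : IntPartition} (h : μ ≤ ν) : μ.len ≤ ν.len := by
  by_contra hc; push_neg at hc
  have h1 := ν.part_eq_zero (le_refl ν.len)
  have h2 := μ.part_pos hc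
  have := h ν.len
  omega

theorem size_le {μ ν : IntPartition} (h : μ ≤ ν) : μ.size ≤ ν.size := by
  rw [μ.size_eq (len_le_len h)]
  exact Finset.sum_le_sum fun i _ => h i

theorem strip_size {μ ν : IntPartition} (hle : μ ≤ ν) {a b : ℕ} (hab : a ≤ b)
    (hlo : ∀ i, i < a → ν.part i = μ.part i) (hhi : ∀ i, b < i → ν.part i = μ.part i)
    (hmid : ∀ i, a ≤ i → i < b → ν.part (i + 1) = μ.part i + 1) :
    ν.size + (μ.part b + a) = μ.size + (ν.part a + b) := by
  set M := max ν.len (b + 1) with hM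
  have hμM : μ.len ≤ M := le_trans (len_le_len hle) (le_max_left _ _)
  have hνM : ν.len ≤ M := le_max_left _ _
  have key : ∀ (f : ℕ → ℕ), ∑ i ∈ Finset.range M, f i =
      ∑ i ∈ Finset.range a, f i + ∑ i ∈ Finset.Icc a b, f i +
        ∑ i ∈ Finset.Ico (b + 1) M, f i := by
    intro f
    rw [← Finset.sum_range_add_sum_Ico f (show b + 1 ≤ M by omega),
      ← Finset.sum_range_add_sum_Ico f (show a ≤ b + 1 by omega)]
    rw [← Finset.Ico_add_one_right_eq_Icc]
  have hs := strip_sum hab hmid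
  have e1 : ∑ i ∈ Finset.range a, ν.part i = ∑ i ∈ Finset.range a, μ.part i :=
    Finset.sum_congr rfl fun i hi => hlo i (Finset.mem_range.mp hi)
  have e2 : ∑ i ∈ Finset.Ico (b + 1) M, ν.part i = ∑ i ∈ Finset.Ico (b + 1) M, μ.part i :=
    Finset.sum_congr rfl fun i hi => hhi i (by exact (Finset.mem_Ico.mp hi).1)
  have h1 := ν.size_eq hνM
  have h2 := μ.size_eq hμM
  have k1 := key ν.part
  have k2 := key μ.part
  omega

theorem StripData.skewSize {μ ν : IntPartition} {a b r : ℕ} (h : StripData μ ν a b r) :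
    skewSize ν μ = r := by
  have hle := h.le
  have hsz := size_le hle
  obtain ⟨hab, hlo, hhi, hin, hmid, heq⟩ := h
  have := strip_size hle hab hlo hhi hmid
  unfold IntPartition.skewSize
  omega

theorem StripData.height_eq {μ ν : IntPartition} {a b r : ℕ} (h : StripData μ ν a b r) :
    height μ ν = b - a := by
  have hfilter : (Finset.range ν.len).filter (fun i => μ.part i < ν.part i) = Finset.Icc a b := by
    ext i
    simp only [Finset.mem_filter, Finset.mem_range, Finset.mem_Icc]
    constructor
    · intro ⟨_, hi⟩; exact (h.row_iff i).mp hi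
    · intro hi
      have h2 := (h.row_iff i).mpr hi
      exact ⟨ν.lt_len (by omega), h2⟩
  rw [height, hfilter, Nat.card_Icc]
  omega

/-- the step relation -/
def R (μ ν : IntPartition) (u v : ℕ × ℕ) : Prop := u ∈ cells μ ν ∧ v ∈ cells μ ν ∧ Adj u v

theorem adj_symm : Symmetric Adj := by
  intro u v h; unfold Adj at *; tauto

theorem R_symm {μ ν : IntPartition} : Symmetric (R μ ν) := by
  intro u v ⟨h1, h2, h3⟩; exact ⟨h2, h1, adj_symm h3⟩

theorem RTG_symm {μ ν : IntPartition} {u v : ℕ × ℕ}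
    (h : Relation.ReflTransGen (R μ ν) u v) : Relation.ReflTransGen (R μ ν) v u :=
  by haveI : Std.Symm (R μ ν) := ⟨fun _ _ h => R_symm h⟩; exact Std.Symm.symm _ _ h

theorem mem_cells {μ ν : IntPartition} {i c : ℕ} :
    (i, c) ∈ cells μ ν ↔ μ.part i ≤ c ∧ c < ν.part i := Iff.rfl

theorem path_right {μ ν : IntPartition} {i c d : ℕ} (hc : μ.part i ≤ c) (hcd : c ≤ d)
    (hd : d < ν.part i) : Relation.ReflTransGen (R μ ν) (i, c) (i, d) := by
  induction d, hcd using Nat.le_induction with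
  | base => exact Relation.ReflTransGen.refl
  | succ d hcd ih =>
    refine Relation.ReflTransGen.tail (ih (by omega)) ?_
    refine ⟨mem_cells.mpr ⟨by omega, by omega⟩, mem_cells.mpr ⟨by omega, hd⟩, ?_⟩
    left; exact ⟨rfl, Or.inl rfl⟩

theorem path_row {μ ν : IntPartition} {i c : ℕ} (h : (i, c) ∈ cells μ ν) :
    Relation.ReflTransGen (R μ ν) (i, c) (i, μ.part i) := by
  exact RTG_symm (path_right le_rfl h.1 h.2)

theorem StripData.conn {μ ν : IntPartition} {a b r : ℕ} (h : StripData μ ν a b r) :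
    ConnectedIn (cells μ ν) := by
  obtain ⟨hab, hlo, hhi, hin, hmid, heq⟩ := h
  -- every starting row cell connects to (a, μ.part a)
  have claim1 : ∀ d, a + d ≤ b →
      Relation.ReflTransGen (R μ ν) (a + d, μ.part (a + d)) (a, μ.part a) := by
    intro d
    induction d with
    | zero => intro _; exact Relation.ReflTransGen.refl
    | succ d ih =>
      intro hd
      have h1 : ν.part (a + d + 1) = μ.part (a + d) + 1 := hmid _ (by omega) (by omega)
      have hcell1 : (a + d + 1, μ.part (a + d)) ∈ cells μ ν := by
        refine mem_cells.mpr ⟨μ.antitone _ _ (by omega), by omega⟩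
      have hstep : R μ ν (a + d + 1, μ.part (a + d)) (a + d, μ.part (a + d)) := by
        refine ⟨hcell1, mem_cells.mpr ⟨le_rfl, hin _ (by omega) (by omega)⟩, ?_⟩
        right; exact ⟨rfl, Or.inr rfl⟩
      have p1 : Relation.ReflTransGen (R μ ν) (a + (d + 1), μ.part (a + (d + 1)))
          (a + d + 1, μ.part (a + d)) := by
        have he : a + (d + 1) = a + d + 1 := by omega
        rw [he]
        exact path_right le_rfl (μ.antitone _ _ (by omega)) (by omega)
      exact ((p1.tail hstep)).trans (ih (by omega))
  -- any cell connects to the base cell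
  have claim2 : ∀ u ∈ cells μ ν, Relation.ReflTransGen (R μ ν) u (a, μ.part a) := by
    intro ⟨i, c⟩ hu
    have hrow : μ.part i < ν.part i := by
      have h' := mem_cells.mp hu; omega
    have hia : a ≤ i := by
      by_contra hc; push_neg at hc; rw [hlo i hc] at hrow; omega
    have hib : i ≤ b := by
      by_contra hc; push_neg at hc; rw [hhi i hc] at hrow; omega
    have he : i = a + (i - a) := by omega
    refine (path_row hu).trans ?_
    rw [show ((i, μ.part i) : ℕ × ℕ) = (a + (i - a), μ.part (a + (i - a))) by rw [← he]]
    exact claim1 (i - a) (by omega)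
  intro u hu w hw
  exact (claim2 u hu).trans (RTG_symm (claim2 w hw))


theorem StripData.isBorderStrip {μ ν : IntPartition} {a b r : ℕ} (h : StripData μ ν a b r) :
    IsBorderStrip μ ν r := by
  refine ⟨h.le, h.skewSize, h.conn, ?_⟩
  rintro i j ⟨h1, h2, h3, h4⟩
  rw [mem_cells] at h1 h2 h3 h4
  have hr1 : μ.part i < ν.part i := by omega
  have hr2 : μ.part (i + 1) < ν.part (i + 1) := by omega
  have hi1 := (h.row_iff i).mp hr1
  have hi2 := (h.row_iff (i + 1)).mp hr2
  have := h.2.2.2.2.1 i hi1.1 (by omega)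
  omega

theorem crossing {μ ν : IntPartition} {u w : ℕ × ℕ} (h : Relation.ReflTransGen (R μ ν) u w)
    {m : ℕ} (hm : u.1 ≤ m) (hm2 : m < w.1) :
    ∃ c, (m, c) ∈ cells μ ν ∧ (m + 1, c) ∈ cells μ ν := by
  induction h with
  | refl => omega
  | @tail p q hp hstep ih =>
    rcases lt_or_ge m p.1 with h1 | h1
    · exact ih h1
    · obtain ⟨hpc, hqc, hadj⟩ := hstep
      have hq1 : q.1 = p.1 + 1 ∧ q.2 = p.2 := by
        rcases hadj with ⟨he, _⟩ | ⟨he, h2⟩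
        · omega
        · rcases h2 with h2 | h2
          · exact ⟨by omega, he.symm⟩
          · omega
      have hpm : p.1 = m := by omega
      refine ⟨p.2, ?_, ?_⟩
      · rw [← hpm]; exact hpc
      · rw [← hpm, ← hq1.2]
        rw [← hq1.1]; exact hqc

theorem isBorderStrip_stripData {μ ν : IntPartition} {r : ℕ} (hr : 1 ≤ r)
    (h : IsBorderStrip μ ν r) : ∃ a b, StripData μ ν a b r := by
  obtain ⟨hle, hskew, hconn, h2x2⟩ := h
  have hsz := size_le hle
  have hne : ∃ i, μ.part i < ν.part i := by
    by_contra hc; push_neg at hc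
    have : ν = μ := ext' fun i => le_antisymm (hc i) (hle i)
    rw [this] at hskew
    unfold IntPartition.skewSize at hskew
    omega
  obtain ⟨i0, hi0⟩ := hne
  set Tf := (Finset.range ν.len).filter (fun i => μ.part i < ν.part i) with hTf
  have hmemT : ∀ i, i ∈ Tf ↔ μ.part i < ν.part i := by
    intro i
    simp only [hTf, Finset.mem_filter, Finset.mem_range]
    exact ⟨fun h => h.2, fun h => ⟨ν.lt_len (by omega), h⟩⟩
  have hTne : Tf.Nonempty := ⟨i0, (hmemT i0).mpr hi0⟩
  set a := Tf.min' hTne with ha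
  set b := Tf.max' hTne with hb
  have hab : a ≤ b := Tf.min'_le b (Tf.max'_mem hTne)
  have haT : μ.part a < ν.part a := (hmemT a).mp (Tf.min'_mem hTne)
  have hbT : μ.part b < ν.part b := (hmemT b).mp (Tf.max'_mem hTne)
  have hlo : ∀ i, i < a → ν.part i = μ.part i := by
    intro i hi
    by_contra hc
    have h' : μ.part i < ν.part i := by have := hle i; omega
    have := Tf.min'_le i ((hmemT i).mpr h')
    omega
  have hhi : ∀ i, b < i → ν.part i = μ.part i := by
    intro i hi
    by_contra hc
    have h' : μ.part i < ν.part i := by have := hle i; omega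
    have := Tf.le_max' i ((hmemT i).mpr h')
    omega
  have hacell : (a, μ.part a) ∈ cells μ ν := mem_cells.mpr ⟨le_rfl, haT⟩
  have hbcell : (b, μ.part b) ∈ cells μ ν := mem_cells.mpr ⟨le_rfl, hbT⟩
  have hcross : ∀ i, a ≤ i → i < b →
      ∃ c, (i, c) ∈ cells μ ν ∧ (i + 1, c) ∈ cells μ ν := by
    intro i h1 h2
    exact crossing (hconn _ hacell _ hbcell) (by exact h1) (by exact h2)
  have hin : ∀ i, a ≤ i → i ≤ b → μ.part i < ν.part i := by
    intro i h1 h2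
    rcases eq_or_lt_of_le h2 with he | h2
    · rw [he]; exact hbT
    · obtain ⟨c, hc1, _⟩ := hcross i h1 h2
      rw [mem_cells] at hc1; omega
  have hmid : ∀ i, a ≤ i → i < b → ν.part (i + 1) = μ.part i + 1 := by
    intro i h1 h2
    obtain ⟨c, hc1, hc2⟩ := hcross i h1 h2
    rw [mem_cells] at hc1 hc2
    have hge : μ.part i < ν.part (i + 1) := by omega
    by_contra hne
    have hgt : μ.part i + 1 < ν.part (i + 1) := by omega
    have hii : μ.part i < ν.part i := hin i h1 (by omega)
    have hmono : ν.part (i + 1) ≤ ν.part i := ν.antitone i (i + 1) (Nat.le_succ i)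
    have hmono2 : μ.part (i + 1) ≤ μ.part i := μ.antitone i (i + 1) (Nat.le_succ i)
    have m1 : (i, μ.part i) ∈ cells μ ν := mem_cells.mpr ⟨le_rfl, by omega⟩
    have m2 : (i + 1, μ.part i) ∈ cells μ ν := mem_cells.mpr ⟨by omega, by omega⟩
    have m3 : (i, μ.part i + 1) ∈ cells μ ν := mem_cells.mpr ⟨by omega, by omega⟩
    have m4 : (i + 1, μ.part i + 1) ∈ cells μ ν := mem_cells.mpr ⟨by omega, by omega⟩
    exact h2x2 i (μ.part i) ⟨m1, m2, m3, m4⟩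
  refine ⟨a, b, hab, hlo, hhi, hin, hmid, ?_⟩
  have := strip_size hle hab hlo hhi hmid
  unfold IntPartition.skewSize at hskew
  omega


section Correspondence

variable (n r : ℕ) (μ : IntPartition)

/-- Exponents of the bialternant numerator for `μ`. -/
def alphaE (i : ℕ) : ℕ := μ.part i + (n - 1 - i)

theorem alphaE_strict {i j : ℕ} (hij : i < j) (hj : j ≤ n - 1) :
    alphaE n μ j < alphaE n μ i := by
  have h1 : μ.part j ≤ μ.part i := μ.antitone i j (by omega)
  unfold alphaE
  omega

/-- nondegeneracy of the bump at `J`. -/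
def NonDeg (J : ℕ) : Prop := ∀ i, i < J → alphaE n μ i ≠ alphaE n μ J + r

theorem jp_exists (hr : 1 ≤ r) (J : ℕ) : ∃ i, alphaE n μ i < alphaE n μ J + r :=
  ⟨J, by omega⟩

/-- The row where the border strip corresponding to the bump at `J` starts. -/
def jp (hr : 1 ≤ r) (J : ℕ) : ℕ := Nat.find (jp_exists n r μ hr J)

theorem jp_le (hr : 1 ≤ r) (J : ℕ) : jp n r μ hr J ≤ J :=
  Nat.find_le (by omega)

theorem jp_lt (hr : 1 ≤ r) (J : ℕ) :
    alphaE n μ (jp n r μ hr J) < alphaE n μ J + r := Nat.find_spec (jp_exists n r μ hr J)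

theorem jp_min (hr : 1 ≤ r) (J : ℕ) {i : ℕ} (h : i < jp n r μ hr J) :
    alphaE n μ J + r ≤ alphaE n μ i := by
  have := Nat.find_min (jp_exists n r μ hr J) h
  omega

theorem jp_min' (hr : 1 ≤ r) {J : ℕ} (hnd : NonDeg n r μ J) {i : ℕ} (h : i < jp n r μ hr J) :
    alphaE n μ J + r < alphaE n μ i := by
  have h1 := jp_min n r μ hr J h
  have h2 := hnd i (by have := jp_le n r μ hr J; omega)
  omega

theorem jp_val (hr : 1 ≤ r) {J : ℕ} (hJ : J < n) :
    μ.part (jp n r μ hr J) + (J - jp n r μ hr J) < μ.part J + r := by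
  have h1 := jp_lt n r μ hr J
  have h2 := jp_le n r μ hr J
  unfold alphaE at h1
  omega

theorem jp_prev (hr : 1 ≤ r) {J : ℕ} (hJ : J < n) (hnd : NonDeg n r μ J) {i : ℕ}
    (h : i < jp n r μ hr J) :
    μ.part J + r ≤ μ.part i + (J - jp n r μ hr J) + (jp n r μ hr J - i) - 1 := by
  have h1 := jp_min' n r μ hr hnd h
  have h2 := jp_le n r μ hr J
  unfold alphaE at h1
  omega

/-- The part function of the new partition. -/
def nuF (hr : 1 ≤ r) (J : ℕ) (i : ℕ) : ℕ :=
  if i < jp n r μ hr J then μ.part i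
  else if i = jp n r μ hr J then μ.part J + r - (J - jp n r μ hr J)
  else if i ≤ J then μ.part (i - 1) + 1
  else μ.part i

theorem nuF_antitone (hr : 1 ≤ r) {J : ℕ} (hJ : J < n) (hnd : NonDeg n r μ J) :
    ∀ i j, i ≤ j → nuF n r μ hr J j ≤ nuF n r μ hr J i := by
  set p := jp n r μ hr J with hp
  have hpJ : p ≤ J := jp_le n r μ hr J
  have hval := jp_val n r μ hr hJ
  have hstep : ∀ i, nuF n r μ hr J (i + 1) ≤ nuF n r μ hr J i := by
    intro i
    unfold nuF
    rw [← hp]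
    by_cases c1 : i + 1 < p
    · rw [if_pos c1, if_pos (show i < p by omega)]
      exact μ.antitone i (i + 1) (by omega)
    · by_cases c2 : i + 1 = p
      · rw [if_neg c1, if_pos c2, if_pos (show i < p by omega)]
        have h2 := jp_prev n r μ hr hJ hnd (i := i) (by omega)
        rw [← hp] at h2
        omega
      · -- p ≤ i
        have hpi : p ≤ i := by omega
        rw [if_neg c1, if_neg c2]
        by_cases c3 : i = p
        · rw [if_neg (show ¬ i < p by omega), if_pos c3]
          by_cases c4 : i + 1 ≤ J
          · rw [if_pos c4]
            have h4 : i + 1 - 1 = p := by omega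
            rw [h4, hp] at *
            omega
          · rw [if_neg c4]
            have hJp : J = p := by omega
            have h5 := μ.antitone J (i + 1) (by omega)
            have h6 : J - p = 0 := by omega
            rw [h6]
            have h7 : μ.part (i + 1) ≤ μ.part J := h5
            omega
        · -- p < i
          rw [if_neg (show ¬ i < p by omega), if_neg c3]
          by_cases c4 : i + 1 ≤ J
          · rw [if_pos c4, if_pos (show i ≤ J by omega)]
            have h4 : i + 1 - 1 = i := by omega
            rw [h4]
            have := μ.antitone (i - 1) i (by omega)
            omega
          · rw [if_neg c4]
            by_cases c5 : i ≤ J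
            · rw [if_pos c5]
              have := μ.antitone (i - 1) (i + 1) (by omega)
              omega
            · rw [if_neg c5]
              exact μ.antitone i (i + 1) (by omega)
  intro i j hij
  induction j, hij using Nat.le_induction with
  | base => exact le_rfl
  | succ j hij ih => exact le_trans (hstep j) ih

/-- The partition obtained by adding the border strip determined by the bump at `J`. -/
def nuJ (hr : 1 ≤ r) {J : ℕ} (hJ : J < n) (hnd : NonDeg n r μ J) : IntPartition where
  part := nuF n r μ hr J
  antitone := nuF_antitone n r μ hr hJ hnd
  finite := by
    have hple : jp n r μ hr J ≤ J := jp_le n r μ hr J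
    refine ⟨μ.len + J + 1, fun i hi => ?_⟩
    unfold nuF
    have h1 : ¬ i < jp n r μ hr J := by omega
    rw [if_neg h1, if_neg (by omega : ¬ i = jp n r μ hr J), if_neg (by omega : ¬ i ≤ J)]
    exact μ.part_eq_zero (by omega)

theorem nuJ_strip (hr : 1 ≤ r) {J : ℕ} (hJ : J < n) (hnd : NonDeg n r μ J) :
    StripData μ (nuJ n r μ hr hJ hnd) (jp n r μ hr J) J r := by
  set p := jp n r μ hr J with hp
  have hpJ : p ≤ J := jp_le n r μ hr J
  have hval := jp_val n r μ hr hJ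
  rw [← hp] at hval
  have hpart : ∀ i, (nuJ n r μ hr hJ hnd).part i = nuF n r μ hr J i := fun _ => rfl
  refine ⟨hpJ, ?_, ?_, ?_, ?_, ?_⟩
  · intro i hi; rw [hpart]; unfold nuF; rw [if_pos (by omega)]
  · intro i hi; rw [hpart]; unfold nuF
    rw [if_neg (by omega), if_neg (by omega), if_neg (by omega)]
  · intro i h1 h2
    rw [hpart]; unfold nuF
    rw [← hp]
    rcases eq_or_lt_of_le h1 with he | h1
    · rw [if_neg (by omega), if_pos he.symm, ← he]
      have := μ.antitone p J (by omega)
      omega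
    · rw [if_neg (by omega), if_neg (by omega), if_pos h2]
      have := μ.antitone (i - 1) i (by omega)
      omega
  · intro i h1 h2
    rw [hpart]; unfold nuF
    rw [if_neg (by omega), if_neg (by omega), if_pos (by omega)]
    congr 1
  · rw [hpart]; unfold nuF
    rw [← hp, if_neg (by omega), if_pos rfl]
    omega

theorem nuJ_len (hμ : μ.len ≤ n) (hr : 1 ≤ r) {J : ℕ} (hJ : J < n) (hnd : NonDeg n r μ J) :
    (nuJ n r μ hr hJ hnd).len ≤ n := by
  by_contra hc
  push_neg at hc
  have h1 := (nuJ n r μ hr hJ hnd).part_pos hc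
  have h2 : (nuJ n r μ hr hJ hnd).part n = nuF n r μ hr J n := rfl
  unfold nuF at h2
  have hple : jp n r μ hr J ≤ J := jp_le n r μ hr J
  rw [if_neg (by omega), if_neg (by omega), if_neg (by omega)] at h2
  rw [h2] at h1
  have := μ.part_eq_zero (show μ.len ≤ n by omega)
  omega

/-- Exponents of the new partition: the sorted bumped vector. -/
theorem nuJ_exp (hμ : μ.len ≤ n) (hr : 1 ≤ r) {J : ℕ} (hJ : J < n) (hnd : NonDeg n r μ J)
    (i : ℕ) (hi : i < n) :
    (nuJ n r μ hr hJ hnd).part i + (n - 1 - i) =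
      if i < jp n r μ hr J then alphaE n μ i
      else if i = jp n r μ hr J then alphaE n μ J + r
      else if i ≤ J then alphaE n μ (i - 1)
      else alphaE n μ i := by
  set p := jp n r μ hr J with hp
  have hpJ : p ≤ J := jp_le n r μ hr J
  have hval := jp_val n r μ hr hJ
  rw [← hp] at hval
  have h2 : (nuJ n r μ hr hJ hnd).part i = nuF n r μ hr J i := rfl
  rw [h2]; unfold nuF alphaE
  rw [← hp]
  by_cases c1 : i < p
  · rw [if_pos c1, if_pos c1]
  · rw [if_neg c1, if_neg c1]
    by_cases c2 : i = p
    · rw [if_pos c2, if_pos c2]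
      subst c2
      omega
    · rw [if_neg c2, if_neg c2]
      by_cases c3 : i ≤ J
      · rw [if_pos c3, if_pos c3]
        omega
      · rw [if_neg c3, if_neg c3]

theorem gamma_eq (hr : 1 ≤ r) {ν : IntPartition} {a b : ℕ} (hsd : StripData μ ν a b r)
    (hb : b < n) : alphaE n μ b + r = alphaE n ν a := by
  obtain ⟨hab, hlo, hhi, hin, hmid, heq⟩ := hsd
  unfold alphaE
  omega

theorem strip_jp (hr : 1 ≤ r) {ν : IntPartition} {a b : ℕ} (hsd : StripData μ ν a b r)
    (hb : b < n) : jp n r μ hr b = a := by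
  have hkey := gamma_eq n r μ hr hsd hb
  obtain ⟨hab, hlo, hhi, hin, hmid, heq⟩ := hsd
  have h1 : alphaE n μ a < alphaE n μ b + r := by
    rw [hkey]
    unfold alphaE
    have := hin a le_rfl hab
    omega
  have h2 : ∀ i, i < a → ¬ (alphaE n μ i < alphaE n μ b + r) := by
    intro i hi
    rw [hkey]
    have h3 : alphaE n μ i = alphaE n ν i := by unfold alphaE; rw [hlo i hi]
    have h4 := alphaE_strict n ν hi (show a ≤ n - 1 by omega)
    omega
  have hle : jp n r μ hr b ≤ a := Nat.find_le h1
  rcases Nat.lt_or_ge (jp n r μ hr b) a with h | h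
  · exact absurd (jp_lt n r μ hr b) (h2 _ h)
  · omega

theorem strip_nondeg (hr : 1 ≤ r) {ν : IntPartition} {a b : ℕ} (hsd : StripData μ ν a b r)
    (hb : b < n) : NonDeg n r μ b := by
  have hkey := gamma_eq n r μ hr hsd hb
  obtain ⟨hab, hlo, hhi, hin, hmid, heq⟩ := hsd
  intro i hi
  rcases Nat.lt_or_ge i a with h | h
  · have h3 : alphaE n μ i = alphaE n ν i := by unfold alphaE; rw [hlo i h]
    have h4 := alphaE_strict n ν h (show a ≤ n - 1 by omega)
    omega
  · -- a ≤ i < b : alphaE μ i = alphaE ν (i+1) < alphaE ν a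
    have h3 : alphaE n μ i = alphaE n ν (i + 1) := by
      unfold alphaE
      rw [hmid i h hi]
      omega
    have h4 := alphaE_strict n ν (show a < i + 1 by omega) (show i + 1 ≤ n - 1 by omega)
    omega

theorem strip_eq_nuJ (hμ : μ.len ≤ n) (hr : 1 ≤ r) {ν : IntPartition} {a b : ℕ}
    (hsd : StripData μ ν a b r) (hb : b < n) :
    nuJ n r μ hr hb (strip_nondeg n r μ hr hsd hb) = ν := by
  have hjp := strip_jp n r μ hr hsd hb
  obtain ⟨hab, hlo, hhi, hin, hmid, heq⟩ := hsd
  refine ext' fun i => ?_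
  show nuF n r μ hr b i = ν.part i
  unfold nuF
  rw [hjp]
  by_cases c1 : i < a
  · rw [if_pos c1, hlo i c1]
  · rw [if_neg c1]
    by_cases c2 : i = a
    · rw [if_pos c2, c2]
      omega
    · rw [if_neg c2]
      by_cases c3 : i ≤ b
      · rw [if_pos c3]
        have := hmid (i - 1) (by omega) (by omega)
        have h4 : i - 1 + 1 = i := by omega
        rw [h4] at this
        omega
      · rw [if_neg c3, hhi i (by omega)]

theorem nuJ_inj (hr : 1 ≤ r) {J J' : ℕ} (hJ : J < n) (hJ' : J' < n)
    (hnd : NonDeg n r μ J) (hnd' : NonDeg n r μ J')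
    (h : nuJ n r μ hr hJ hnd = nuJ n r μ hr hJ' hnd') : J = J' := by
  have h1 := (nuJ_strip n r μ hr hJ hnd).row_iff
  have h2 := (nuJ_strip n r μ hr hJ' hnd').row_iff
  rw [h] at h1
  by_contra hne
  rcases Nat.lt_or_ge J J' with hlt | hge
  · have := ((h2 J').mpr ⟨jp_le n r μ hr J', le_rfl⟩)
    have := (h1 J').mp this
    omega
  · have := ((h1 J).mpr ⟨jp_le n r μ hr J, le_rfl⟩)
    have := (h2 J).mp this
    omega

theorem strip_bounds (hr : 1 ≤ r) {ν : IntPartition} {a b : ℕ} (hsd : StripData μ ν a b r) :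
    a ≤ μ.len ∧ b < μ.len + r ∧ ∀ i, ν.part i ≤ μ.part 0 + r := by
  obtain ⟨hab, hlo, hhi, hin, hmid, heq⟩ := hsd
  have ha : a ≤ μ.len := by
    by_contra hc
    push_neg at hc
    have h1 : ν.part μ.len = μ.part μ.len := hlo _ hc
    have h2 := μ.part_len
    have h3 := ν.antitone μ.len a (by omega)
    have h4 := hin a le_rfl hab
    have h5 := μ.part_eq_zero (le_refl μ.len)
    omega
  have hμab : μ.part b ≤ μ.part a := μ.antitone a b hab
  have hina := hin a le_rfl hab
  have hb : b < μ.len + r := by omega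
  refine ⟨ha, hb, fun i => ?_⟩
  have h0 : ν.part i ≤ ν.part 0 := ν.antitone 0 i (by omega)
  have hμ0 : μ.part b ≤ μ.part 0 := μ.antitone 0 b (by omega)
  have hμ0' : μ.part 0 ≤ ν.part 0 := by
    rcases Nat.eq_zero_or_pos a with h | h
    · rw [h] at hina; exact hina.le
    · rw [hlo 0 h]
  rcases Nat.eq_zero_or_pos a with h | h
  · subst h
    omega
  · rw [hlo 0 h] at h0
    omega

theorem bs_finite (hr : 1 ≤ r) : {ν : IntPartition | IsBorderStrip μ ν r}.Finite := by
  classical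
  set B := μ.part 0 + r with hB
  set L := μ.len + r with hL
  set f : IntPartition → (Fin L → Fin (B + 1)) :=
    fun ν i => ⟨min (ν.part i) B, by omega⟩ with hf
  apply Set.Finite.of_finite_image (f := f) (Set.toFinite _)
  intro ν hν ν' hν' hfe
  obtain ⟨a, b, hsd⟩ := isBorderStrip_stripData hr hν
  obtain ⟨a', b', hsd'⟩ := isBorderStrip_stripData hr hν'
  obtain ⟨ha, hb, hbound⟩ := strip_bounds _ _ hr hsd
  obtain ⟨ha', hb', hbound'⟩ := strip_bounds _ _ hr hsd'
  refine ext' fun i => ?_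
  rcases Nat.lt_or_ge i L with hi | hi
  · have := congrFun hfe ⟨i, hi⟩
    simp only [hf, Fin.mk.injEq] at this
    have b1 := hbound i
    have b2 := hbound' i
    omega
  · rw [hsd.2.2.1 i (by omega), hsd'.2.2.1 i (by omega)]

end Correspondence


end IntPartition

/-- The field of rational functions in `n` variables over `ℚ`. -/
abbrev K (n : ℕ) := FractionRing (MvPolynomial (Fin n) ℚ)

/-- The variables `x_i`. -/
def X {n : ℕ} (i : Fin n) : K n :=
  algebraMap (MvPolynomial (Fin n) ℚ) (K n) (MvPolynomial.X i)

/-- The power sum polynomial `p_r(x_1,…,x_n)`. -/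
def psum (n r : ℕ) : K n := ∑ i : Fin n, X i ^ r

/-- The elementary symmetric polynomial `e_r(x_1,…,x_n)`. -/
def esymm (n r : ℕ) : K n :=
  ∑ s ∈ Finset.powersetCard r (Finset.univ : Finset (Fin n)), ∏ i ∈ s, X i

/-- The complete homogeneous symmetric polynomial `h_r(x_1,…,x_n)`. -/
def hsymm (n r : ℕ) : K n :=
  ∑ c : Sym (Fin n) r, (c.1.map (fun i => X i)).prod

/-- The Schur polynomial `s_μ(x_1,…,x_n)`, via the bialternant formula
(zero when `μ` has more than `n` parts). -/
def schur (n : ℕ) (μ : IntPartition) : K n :=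
  if μ.len ≤ n then
    (Matrix.det (Matrix.of fun i j : Fin n => X i ^ (μ.part j + (n - 1 - (j : ℕ))))) /
      (Matrix.det (Matrix.of fun i j : Fin n => X i ^ (n - 1 - (j : ℕ))))
  else 0


/-- determinant of the generalized Vandermonde with exponents `α : ℕ → ℕ`. -/
def detX (n : ℕ) (α : ℕ → ℕ) : K n :=
  Matrix.det (Matrix.of fun i j : Fin n => X i ^ α (j : ℕ))

theorem lemmaA (n r : ℕ) (α : ℕ → ℕ) :
    psum n r * detX n α =
      ∑ J : Fin n, detX n (fun i => α i + if i = (J : ℕ) then r else 0) := by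
  classical
  unfold detX
  simp only [Matrix.det_apply']
  rw [Finset.mul_sum, Finset.sum_comm]
  refine Finset.sum_congr rfl fun σ _ => ?_
  have key : ∀ J : Fin n,
      ∏ i : Fin n, Matrix.of (fun i j : Fin n => X i ^ (α (j:ℕ) + if (j:ℕ) = (J:ℕ) then r else 0)) (σ i) i
        = (∏ i : Fin n, X (σ i) ^ α (i : ℕ)) * X (σ J) ^ r := by
    intro J
    simp only [Matrix.of_apply, pow_add]
    rw [Finset.prod_mul_distrib]
    congr 1
    rw [show (∏ i : Fin n, X (σ i) ^ if (i:ℕ) = (J:ℕ) then r else 0)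
        = ∏ i : Fin n, if i = J then X (σ i) ^ r else 1 from
      Finset.prod_congr rfl fun i _ => by
        by_cases h : i = J
        · rw [if_pos h, if_pos (by rw [h])]
        · rw [if_neg h, if_neg (fun hc => h (Fin.ext hc)), pow_zero]]
    rw [Finset.prod_ite_eq' Finset.univ J (fun i => X (σ i) ^ r)]
    rw [if_pos (Finset.mem_univ J)]
  calc psum n r * (Equiv.Perm.sign σ * ∏ i : Fin n,
        Matrix.of (fun i j : Fin n => X i ^ α (j:ℕ)) (σ i) i)
      = ∑ J : Fin n, (Equiv.Perm.sign σ : K n) * ((∏ i : Fin n, X (σ i) ^ α (i : ℕ)) * X (σ J) ^ r) := by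
        simp only [Matrix.of_apply]
        rw [psum, ← Equiv.sum_comp σ (fun k => X k ^ r), Finset.sum_mul]
        exact Finset.sum_congr rfl fun J _ => by ring
    _ = _ := by
        refine Finset.sum_congr rfl fun J _ => ?_
        rw [key J]

theorem detX_zero {n r : ℕ} (α : ℕ → ℕ) (J : Fin n) {i : ℕ} (hi : i < (J : ℕ))
    (he : α i = α (J : ℕ) + r) :
    detX n (fun k => α k + if k = (J : ℕ) then r else 0) = 0 := by
  have hi' : i < n := lt_trans hi J.isLt
  apply Matrix.det_zero_of_column_eq (i := (⟨i, hi'⟩ : Fin n)) (j := J)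
  · intro hc
    have : i = (J : ℕ) := congrArg Fin.val hc
    omega
  · intro k
    show X k ^ (α i + if i = (J : ℕ) then r else 0)
        = X k ^ (α (J : ℕ) + if (J : ℕ) = (J : ℕ) then r else 0)
    rw [if_neg (by omega : ¬ i = (J : ℕ)), if_pos rfl, he, add_zero]

theorem detX_adjswap {n : ℕ} (w wp : ℕ → ℕ) {p : ℕ} (hp : p + 1 < n)
    (h1 : w p = wp (p + 1)) (h2 : w (p + 1) = wp p)
    (h3 : ∀ i, i ≠ p → i ≠ p + 1 → w i = wp i) :
    detX n w = - detX n wp := by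
  classical
  set a : Fin n := ⟨p, by omega⟩ with ha
  set b : Fin n := ⟨p + 1, hp⟩ with hb
  have hab : a ≠ b := by
    intro hc
    have : p = p + 1 := congrArg Fin.val hc
    omega
  have key : ∀ j : Fin n, w (j : ℕ) = wp ((Equiv.swap a b j : Fin n) : ℕ) := by
    intro j
    rcases eq_or_ne j a with hj | hj
    · rw [hj, Equiv.swap_apply_left]; exact h1
    · rcases eq_or_ne j b with hj' | hj'
      · rw [hj', Equiv.swap_apply_right]; exact h2
      · rw [Equiv.swap_apply_of_ne_of_ne hj hj']
        refine h3 _ (fun hc => hj (Fin.ext hc)) (fun hc => hj' (Fin.ext hc))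
  have hM : Matrix.of (fun i j : Fin n => X i ^ w (j : ℕ))
      = (Matrix.of fun i j : Fin n => X i ^ wp (j : ℕ)).submatrix id (Equiv.swap a b) := by
    ext i j
    simp only [Matrix.of_apply, Matrix.submatrix_apply, id_eq]
    rw [key j]
  have h := Matrix.det_permute' (Equiv.swap a b)
    (Matrix.of fun i j : Fin n => X i ^ wp (j : ℕ))
  rw [Equiv.Perm.sign_swap hab] at h
  unfold detX
  rw [hM, h]
  push_cast
  ring



theorem detX_congr {n : ℕ} {f g : ℕ → ℕ} (h : ∀ i, i < n → f i = g i) :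
    detX n f = detX n g := by
  unfold detX
  congr 1
  ext i j
  simp only [Matrix.of_apply]
  rw [h j j.isLt]

theorem detX_sort (n r : ℕ) (μ : IntPartition) (hμ : μ.len ≤ n) (hr : 1 ≤ r) {J : ℕ}
    (hJ : J < n) (hnd : IntPartition.NonDeg n r μ J) :
    detX n (fun i => IntPartition.alphaE n μ i + if i = J then r else 0)
      = (-1 : K n) ^ (J - IntPartition.jp n r μ hr J)
        * detX n (fun i => (IntPartition.nuJ n r μ hr hJ hnd).part i + (n - 1 - i)) := by
  classical
  set p := IntPartition.jp n r μ hr J with hp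
  have hpJ : p ≤ J := IntPartition.jp_le n r μ hr J
  set w : ℕ → ℕ → ℕ := fun q i =>
    if i < q ∨ J < i then IntPartition.alphaE n μ i
    else if i = q then IntPartition.alphaE n μ J + r
    else IntPartition.alphaE n μ (i - 1) with hw
  have hWJ : detX n (fun i => IntPartition.alphaE n μ i + if i = J then r else 0)
      = detX n (w J) := by
    apply detX_congr
    intro i _
    simp only [hw]
    by_cases h1 : i < J ∨ J < i
    · rw [if_pos h1, if_neg (by omega), add_zero]
    · have hiJ : i = J := by omega
      subst hiJ
      rw [if_pos rfl, if_neg h1, if_pos rfl]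
  have hstep : ∀ q, p ≤ q → q < J → detX n (w q) = - detX n (w (q + 1)) := by
    intro q hq1 hq2
    apply detX_adjswap (w q) (w (q + 1)) (p := q) (show q + 1 < n by omega)
    · simp only [hw, Nat.add_sub_cancel]
      split_ifs <;> omega
    · simp only [hw, Nat.add_sub_cancel]
      split_ifs <;> omega
    · intro i hi1 hi2
      simp only [hw, Nat.add_sub_cancel]
      split_ifs <;> omega
  have hInd : ∀ d q, q + d = J → p ≤ q →
      detX n (w q) = (-1 : K n) ^ d * detX n (w J) := by
    intro d
    induction d with
    | zero =>
      intro q hq _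
      have : q = J := by omega
      subst this
      simp
    | succ d ih =>
      intro q hq hpq
      rw [hstep q hpq (by omega), ih (q + 1) (by omega) (by omega)]
      ring
  have h1 := hInd (J - p) p (by omega) le_rfl
  have hWp : detX n (fun i => (IntPartition.nuJ n r μ hr hJ hnd).part i + (n - 1 - i))
      = detX n (w p) := by
    apply detX_congr
    intro i hi
    rw [IntPartition.nuJ_exp n r μ hμ hr hJ hnd i hi]
    simp only [hw]
    rw [← hp]
    by_cases c1 : i < p
    · rw [if_pos c1, if_pos (by omega : i < p ∨ J < i)]
    · rw [if_neg c1]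
      by_cases c2 : i = p
      · rw [if_pos c2, if_neg (by omega), if_pos c2]
      · rw [if_neg c2]
        by_cases c3 : i ≤ J
        · rw [if_pos c3, if_neg (by omega), if_neg c2]
        · rw [if_neg c3, if_pos (by omega : i < p ∨ J < i)]
  rw [hWJ, hWp, h1]
  rw [← mul_assoc, ← pow_add]
  rw [Even.neg_one_pow ⟨J - p, by omega⟩, one_mul]

/-- The Murnaghan–Nakayama rule: for a partition `μ` with at most `n` parts and
a positive integer `r`, `p_r · s_μ = Σ_{ν/μ ∈ BS(r)} (-1)^{ht(ν/μ)} s_ν`. -/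
theorem murnaghan_nakayama (n r : ℕ) (hr : 1 ≤ r) (μ : IntPartition) (hμ : μ.len ≤ n) :
    psum n r * schur n μ =
      ∑ᶠ ν ∈ {ν | IntPartition.IsBorderStrip μ ν r},
        (-1 : K n) ^ IntPartition.height μ ν * schur n ν := by
  classical
  set V := detX n (fun i => n - 1 - i) with hV
  set S := {ν : IntPartition | IntPartition.IsBorderStrip μ ν r} with hS
  have hSfin : S.Finite := IntPartition.bs_finite _ _ hr
  set F : IntPartition → K n :=
    fun ν => (-1 : K n) ^ IntPartition.height μ ν * schur n ν with hF
  have hfin2 : (S ∩ Function.support F).Finite := hSfin.inter_of_left _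
  have hsub : hfin2.toFinset ⊆ hSfin.toFinset := by
    intro x hx
    rw [Set.Finite.mem_toFinset] at *
    exact hx.1
  calc psum n r * schur n μ
      = ∑ J ∈ Finset.univ.filter (fun J : Fin n => IntPartition.NonDeg n r μ (J : ℕ)),
          detX n (fun i => IntPartition.alphaE n μ i + if i = (J : ℕ) then r else 0) / V := ?_
    _ = ∑ ν ∈ hSfin.toFinset.filter (fun ν => ν.len ≤ n), F ν := ?_
    _ = ∑ᶠ ν ∈ S, F ν := ?_
  · -- LHS to nondegenerate bump sum
    have hschur : schur n μ = detX n (IntPartition.alphaE n μ) / V := by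
      unfold schur
      rw [if_pos hμ]
      rfl
    rw [hschur, ← mul_div_assoc, lemmaA n r (IntPartition.alphaE n μ), Finset.sum_div]
    rw [← Finset.sum_filter_add_sum_filter_not Finset.univ
      (fun J : Fin n => IntPartition.NonDeg n r μ (J : ℕ))]
    have hzero : ∀ J ∈ Finset.univ.filter
        (fun J : Fin n => ¬ IntPartition.NonDeg n r μ (J : ℕ)),
        detX n (fun i => IntPartition.alphaE n μ i + if i = (J : ℕ) then r else 0) / V = 0 := by
      intro J hJ
      rw [Finset.mem_filter] at hJ
      have h1 := hJ.2
      unfold IntPartition.NonDeg at h1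
      push_neg at h1
      obtain ⟨i, hi1, hi2⟩ := h1
      rw [detX_zero (IntPartition.alphaE n μ) J hi1 hi2, zero_div]
    rw [Finset.sum_eq_zero hzero, add_zero]
  · -- bijection
    refine Finset.sum_bij
      (fun J hJ => IntPartition.nuJ n r μ hr J.isLt (Finset.mem_filter.mp hJ).2) ?_ ?_ ?_ ?_
    · intro J hJ
      rw [Finset.mem_filter, Set.Finite.mem_toFinset]
      have hnd := (Finset.mem_filter.mp hJ).2
      exact ⟨(IntPartition.nuJ_strip n r μ hr J.isLt hnd).isBorderStrip,
        IntPartition.nuJ_len n r μ hμ hr J.isLt hnd⟩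
    · intro J hJ J' hJ' he
      exact Fin.ext (IntPartition.nuJ_inj n r μ hr J.isLt J'.isLt
        (Finset.mem_filter.mp hJ).2 (Finset.mem_filter.mp hJ').2 he)
    · intro ν hν
      rw [Finset.mem_filter, Set.Finite.mem_toFinset] at hν
      obtain ⟨hbs, hlen⟩ := hν
      obtain ⟨a, b, hsd⟩ := IntPartition.isBorderStrip_stripData hr hbs
      have hbrow := hsd.2.2.2.1 b hsd.1 le_rfl
      have hbn : b < n := by
        have := ν.lt_len (by omega : 0 < ν.part b)
        omega
      have hnd := IntPartition.strip_nondeg n r μ hr hsd hbn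
      refine ⟨⟨b, hbn⟩, Finset.mem_filter.mpr ⟨Finset.mem_univ _, hnd⟩, ?_⟩
      exact IntPartition.strip_eq_nuJ n r μ hμ hr hsd hbn
    · intro J hJ
      have hnd := (Finset.mem_filter.mp hJ).2
      have hsd := IntPartition.nuJ_strip n r μ hr J.isLt hnd
      have hht := hsd.height_eq
      have hlen := IntPartition.nuJ_len n r μ hμ hr J.isLt hnd
      have hschur : schur n (IntPartition.nuJ n r μ hr J.isLt hnd)
          = detX n (fun i => (IntPartition.nuJ n r μ hr J.isLt hnd).part i + (n - 1 - i)) / V := by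
        unfold schur
        rw [if_pos hlen]
        rfl
      rw [hF]
      simp only
      rw [hschur, hht, detX_sort n r μ hμ hr J.isLt hnd]
      rw [mul_div_assoc]
  · -- finsum
    rw [finsum_mem_eq_sum F hfin2]
    have hext : ∀ x ∈ hSfin.toFinset, x ∉ hfin2.toFinset → F x = 0 := by
      intro x hx1 hx2
      by_contra hne
      apply hx2
      rw [Set.Finite.mem_toFinset]
      exact ⟨(Set.Finite.mem_toFinset hSfin).mp hx1, hne⟩
    rw [Finset.sum_subset hsub hext]
    rw [← Finset.sum_filter_add_sum_filter_not hSfin.toFinset (fun ν => ν.len ≤ n)]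
    have hzero : ∀ ν ∈ hSfin.toFinset.filter (fun ν => ¬ ν.len ≤ n), F ν = 0 := by
      intro ν hν
      rw [Finset.mem_filter] at hν
      rw [hF]
      simp only
      unfold schur
      rw [if_neg hν.2, mul_zero]
    rw [Finset.sum_eq_zero hzero, add_zero]
end
end

section
/- For any partition μ with at most n parts and any nonnegative integer r, e_r(x_1,...,x_n) · s_μ(x_1,...,x_n) = Σ_γ s_γ(x_1,...,x_n), where the sum is over all partitions γ ⊇ μ such that γ/μ is a vertical strip with r boxes (at most one box in each row). -/
open scoped BigOperators

noncomputable section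

namespace Pieri

variable {n : ℕ}

lemma X_injective {n : ℕ} : Function.Injective (X (n := n)) := by
  intro i j h
  have h1 : Function.Injective (algebraMap (MvPolynomial (Fin n) ℚ) (K n)) :=
    IsFractionRing.injective _ _
  exact MvPolynomial.X_injective (h1 h)

/-- The alternant `det (x_i ^ β j)`. -/
def alt (n : ℕ) (β : Fin n → ℕ) : K n :=
  Matrix.det (Matrix.of fun i j : Fin n => X i ^ β j)

lemma altdelta_ne_zero : alt n (fun j => n - 1 - (j : ℕ)) ≠ 0 := by
  have hv : (Matrix.vandermonde (X (n := n))).det ≠ 0 := by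
    rw [Matrix.det_vandermonde]
    apply Finset.prod_ne_zero_iff.2
    intro i _
    apply Finset.prod_ne_zero_iff.2
    intro j hj
    have hij : i < j := Finset.mem_Ioi.mp hj
    exact sub_ne_zero.2 fun h => hij.ne ((X_injective h).symm)
  have key : alt n (fun j => n - 1 - (j : ℕ)) =
      ((Matrix.vandermonde (X (n := n))).submatrix id Fin.revPerm).det := by
    unfold alt
    congr 1
    ext i j
    simp only [Matrix.vandermonde, Matrix.submatrix_apply, Matrix.of_apply, id_eq,
      Fin.revPerm_apply, Fin.val_rev]
    congr 1
    omega
  rw [key, Matrix.det_permute']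
  simp only [ne_eq, mul_eq_zero, not_or]
  refine ⟨?_, hv⟩
  rcases Int.units_eq_one_or (Equiv.Perm.sign (Fin.revPerm : Equiv.Perm (Fin n))) with h | h <;>
    simp [h]

lemma esymm_mul_alt (r : ℕ) (β : Fin n → ℕ) :
    esymm n r * alt n β =
      ∑ T ∈ Finset.powersetCard r (Finset.univ : Finset (Fin n)),
        alt n (fun j => β j + if j ∈ T then 1 else 0) := by
  classical
  unfold esymm alt
  rw [Finset.sum_mul]
  have step1 : ∀ S ∈ Finset.powersetCard r (Finset.univ : Finset (Fin n)),
      (∏ i ∈ S, X i) * Matrix.det (Matrix.of fun i j : Fin n => X i ^ β j) =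
      Matrix.det (Matrix.of fun i j : Fin n =>
        (if i ∈ S then X i else 1) * X i ^ β j) := by
    intro S _
    have hdm := Matrix.det_mul_column (fun i => if i ∈ S then X i else 1)
      (Matrix.of fun i j : Fin n => X i ^ β j)
    simp only [Matrix.of_apply] at hdm
    rw [hdm]
    congr 1
    rw [Finset.prod_ite_mem, Finset.univ_inter]
  rw [Finset.sum_congr rfl step1]
  simp only [Matrix.det_apply']
  rw [Finset.sum_comm, Finset.sum_comm (s := Finset.powersetCard r Finset.univ)]
  refine Finset.sum_congr rfl fun σ _ => ?_
  refine Finset.sum_bij' (fun S _ => S.image σ.symm) (fun T _ => T.image σ) ?_ ?_ ?_ ?_ ?_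
  · intro S hS
    simp only [Finset.mem_powersetCard] at hS ⊢
    exact ⟨Finset.subset_univ _, by rw [Finset.card_image_of_injective _ σ.symm.injective, hS.2]⟩
  · intro T hT
    simp only [Finset.mem_powersetCard] at hT ⊢
    exact ⟨Finset.subset_univ _, by rw [Finset.card_image_of_injective _ σ.injective, hT.2]⟩
  · intro S _
    ext x
    simp [Finset.mem_image]
  · intro T _
    ext x
    simp [Finset.mem_image]
  · intro S _
    congr 1
    refine Finset.prod_congr rfl fun i _ => ?_
    simp only [Matrix.of_apply]
    have : (i ∈ S.image σ.symm) = (σ i ∈ S) := by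
      simp [Finset.mem_image, Equiv.symm_apply_eq]
    rw [pow_add]
    split_ifs with h1 h2 h2
    · ring
    · exact absurd (by rw [this] at h2; exact h2) (by simp_all)
    · rw [this] at h2; exact absurd h2 h1
    · ring

/-! ### IntPartition helpers -/

lemma IntPartition.ext' {μ ν : IntPartition} (h : ∀ i, μ.part i = ν.part i) : μ = ν := by
  cases μ; cases ν
  have : _ = _ := funext h
  simp only at this
  subst this
  rfl

lemma part_len_eq_zero (μ : IntPartition) : μ.part μ.len = 0 := by
  unfold IntPartition.len
  exact Nat.find_spec (p := fun N => μ.part N = 0) _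

lemma part_eq_zero {μ : IntPartition} {N : ℕ} (h : μ.len ≤ N) : μ.part N = 0 :=
  Nat.le_antisymm ((part_len_eq_zero μ) ▸ μ.antitone _ _ h) (Nat.zero_le _)

lemma len_le_of_part_eq_zero {μ : IntPartition} {N : ℕ} (h : μ.part N = 0) : μ.len ≤ N := by
  unfold IntPartition.len
  exact Nat.find_min' _ h

lemma size_eq {μ : IntPartition} {N : ℕ} (h : μ.len ≤ N) :
    μ.size = ∑ i ∈ Finset.range N, μ.part i := by
  unfold IntPartition.size
  apply Finset.sum_subset (Finset.range_subset_range.2 h)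
  intro x _ hx
  exact part_eq_zero (by simpa using Nat.le_of_not_lt (fun hc => hx (Finset.mem_range.2 hc)))

/-! ### Indicator machinery -/

/-- Indicator of a subset of rows, as a function on `ℕ`. -/
def ind (T : Finset (Fin n)) (i : ℕ) : ℕ :=
  if h : i < n then (if (⟨i, h⟩ : Fin n) ∈ T then 1 else 0) else 0

lemma ind_fin (T : Finset (Fin n)) (j : Fin n) :
    ind T (j : ℕ) = if j ∈ T then 1 else 0 := by
  simp [ind, j.isLt]

lemma ind_le_one (T : Finset (Fin n)) (i : ℕ) : ind T i ≤ 1 := by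
  unfold ind; split_ifs <;> simp

lemma ind_eq_zero (T : Finset (Fin n)) {i : ℕ} (h : n ≤ i) : ind T i = 0 :=
  dif_neg (by omega)

lemma sum_ind (T : Finset (Fin n)) : ∑ i ∈ Finset.range n, ind T i = T.card := by
  classical
  rw [← Fin.sum_univ_eq_sum_range (fun i => ind T i) n]
  rw [Finset.sum_congr rfl (fun j _ => ind_fin T j)]
  rw [Finset.sum_ite_mem, Finset.univ_inter, Finset.sum_const, smul_eq_mul, mul_one]

/-- `T` describes a valid vertical strip over `μ`. -/
def good (μ : IntPartition) (T : Finset (Fin n)) : Prop :=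
  ∀ i : Fin n, μ.part ((i : ℕ) + 1) + ind T ((i : ℕ) + 1) ≤ μ.part i + ind T i

instance (μ : IntPartition) : DecidablePred (good (n := n) μ) := fun T => by
  unfold good; infer_instance

lemma good_all {μ : IntPartition} {T : Finset (Fin n)} (hg : good μ T) :
    ∀ i : ℕ, μ.part (i + 1) + ind T (i + 1) ≤ μ.part i + ind T i := by
  intro i
  by_cases h : i < n
  · exact hg ⟨i, h⟩
  · rw [ind_eq_zero T (by omega), ind_eq_zero T (by omega)]
    have := μ.antitone i (i + 1) (Nat.le_succ i)
    omega

/-- The partition `μ + 1_T` for good `T`. -/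
def gam (μ : IntPartition) (T : Finset (Fin n)) (hg : good μ T) : IntPartition where
  part i := μ.part i + ind T i
  antitone := by
    intro i j hij
    have h : Antitone (fun k => μ.part k + ind T k) :=
      antitone_nat_of_succ_le (good_all hg)
    exact h hij
  finite := by
    obtain ⟨N, hN⟩ := μ.finite
    refine ⟨N + n, fun i hi => ?_⟩
    show μ.part i + ind T i = 0
    rw [hN i (by omega), ind_eq_zero T (by omega)]

lemma gam_part (μ : IntPartition) (T : Finset (Fin n)) (hg : good μ T) (i : ℕ) :
    (gam μ T hg).part i = μ.part i + ind T i := rfl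

lemma gam_len_le {μ : IntPartition} (hμ : μ.len ≤ n) (T : Finset (Fin n)) (hg : good μ T) :
    (gam μ T hg).len ≤ n := by
  apply len_le_of_part_eq_zero
  rw [gam_part, part_eq_zero hμ, ind_eq_zero T le_rfl]

lemma gam_strip {μ : IntPartition} (hμ : μ.len ≤ n) {r : ℕ} (T : Finset (Fin n))
    (hT : T.card = r) (hg : good μ T) :
    IntPartition.IsVerticalStrip μ (gam μ T hg) r := by
  refine ⟨fun i => Nat.le_add_right _ _, ?_, fun i => by
    have := ind_le_one T i; rw [gam_part]; omega⟩
  unfold IntPartition.skewSize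
  rw [size_eq (gam_len_le hμ T hg), size_eq hμ]
  simp_rw [gam_part]
  rw [Finset.sum_add_distrib, sum_ind, hT]
  omega

lemma gam_inj {μ : IntPartition} {T T' : Finset (Fin n)} {h1 : good μ T} {h2 : good μ T'}
    (h : gam μ T h1 = gam μ T' h2) : T = T' := by
  ext j
  have hp := congrArg (fun ν => IntPartition.part ν (j : ℕ)) h
  simp only [gam_part] at hp
  have hi : ind T (j : ℕ) = ind T' (j : ℕ) := by omega
  rw [ind_fin, ind_fin] at hi
  by_cases hT : j ∈ T <;> by_cases hT' : j ∈ T' <;> simp_all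

lemma strip_to_gam {μ γ : IntPartition} {r : ℕ} (hμ : μ.len ≤ n) (hγ : γ.len ≤ n)
    (hs : IntPartition.IsVerticalStrip μ γ r) :
    ∃ (T : Finset (Fin n)) (hg : good μ T), T.card = r ∧ γ = gam μ T hg := by
  classical
  obtain ⟨hle, hsize, hone⟩ := hs
  set T : Finset (Fin n) := Finset.univ.filter (fun j : Fin n => μ.part j < γ.part j) with hTdef
  have key : ∀ i : ℕ, γ.part i = μ.part i + ind T i := by
    intro i
    by_cases h : i < n
    · have h1 := hle i
      have h2 := hone i
      have hmem : ((⟨i, h⟩ : Fin n) ∈ T) ↔ μ.part i < γ.part i := by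
        simp [hTdef]
      unfold ind
      rw [dif_pos h]
      by_cases hlt : μ.part i < γ.part i
      · rw [if_pos (hmem.2 hlt)]; omega
      · rw [if_neg (fun hc => hlt (hmem.1 hc))]; omega
    · rw [ind_eq_zero T (by omega), part_eq_zero (hγ.trans (by omega)),
        part_eq_zero (hμ.trans (by omega))]
  have hg : good μ T := by
    intro i
    rw [← key, ← key]
    exact γ.antitone _ _ (Nat.le_succ _)
  have hsz : γ.size = μ.size + T.card := by
    rw [size_eq hγ, size_eq hμ, ← sum_ind T, ← Finset.sum_add_distrib]
    exact Finset.sum_congr rfl fun i _ => key i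
  have hcard : T.card = r := by
    unfold IntPartition.skewSize at hsize
    omega
  exact ⟨T, hg, hcard, IntPartition.ext' key⟩

lemma alt_eq_zero_of_bad {μ : IntPartition} (hμ : μ.len ≤ n) {T : Finset (Fin n)}
    (hbad : ¬ good μ T) :
    alt n (fun j => μ.part (j : ℕ) + (n - 1 - (j : ℕ)) + if j ∈ T then 1 else 0) = 0 := by
  unfold good at hbad
  push_neg at hbad
  obtain ⟨i, hi⟩ := hbad
  have hle1 := ind_le_one T ((i : ℕ) + 1)
  have hle2 := ind_le_one T (i : ℕ)
  have hmono := μ.antitone (i : ℕ) ((i : ℕ) + 1) (Nat.le_succ _)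
  have hn1 : (i : ℕ) + 1 < n := by
    by_contra hc
    rw [ind_eq_zero (i := (i : ℕ) + 1) T (by omega)] at hi
    omega
  have hind1 : ind T ((i : ℕ) + 1) = 1 := by omega
  have hind0 : ind T (i : ℕ) = 0 := by omega
  have hpart : μ.part ((i : ℕ) + 1) = μ.part (i : ℕ) := by omega
  set j' : Fin n := ⟨(i : ℕ) + 1, hn1⟩ with hj'def
  have hiT : (if i ∈ T then 1 else 0) = 0 := by rw [← ind_fin]; exact hind0
  have hjT : (if j' ∈ T then 1 else 0) = 1 := by
    rw [← ind_fin]; exact hind1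
  apply Matrix.det_zero_of_column_eq (i := i) (j := j')
  · exact Fin.ne_of_val_ne (by simp [hj'def])
  · intro k
    simp only [Matrix.of_apply]
    congr 1
    rw [hiT, hjT, hpart]
    have hj1 : ((j' : Fin n) : ℕ) = (i : ℕ) + 1 := rfl
    have hj2 : ((⟨(i : ℕ) + 1, hn1⟩ : Fin n) : ℕ) = (i : ℕ) + 1 := rfl
    omega

end Pieri

/-- Pieri's rule (elementary version): `e_r · s_μ = Σ_{γ/μ ∈ VS(r)} s_γ`. -/
theorem pieri_esymm (n r : ℕ) (μ : IntPartition) (hμ : μ.len ≤ n) :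
    esymm n r * schur n μ =
      ∑ᶠ γ ∈ {γ | IntPartition.IsVerticalStrip μ γ r}, schur n γ := by
  classical
  -- notation
  have hδ0 : Pieri.alt n (fun j : Fin n => n - 1 - (j : ℕ)) ≠ 0 := Pieri.altdelta_ne_zero
  have hs : schur n μ = Pieri.alt n (fun j => μ.part (j : ℕ) + (n - 1 - (j : ℕ))) /
      Pieri.alt n (fun j : Fin n => n - 1 - (j : ℕ)) := by
    unfold schur
    rw [if_pos hμ]
    rfl
  set G : Finset (Finset (Fin n)) :=
    (Finset.powersetCard r (Finset.univ : Finset (Fin n))).filter (Pieri.good μ) with hGdef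
  have hGmem : ∀ T ∈ G, Pieri.good μ T ∧ T.card = r := by
    intro T hT
    rw [hGdef, Finset.mem_filter, Finset.mem_powersetCard] at hT
    exact ⟨hT.2, hT.1.2⟩
  have hterm : ∀ (T : Finset (Fin n)) (hg : Pieri.good μ T),
      schur n (Pieri.gam μ T hg) =
        Pieri.alt n (fun j => μ.part (j : ℕ) + (n - 1 - (j : ℕ)) + if j ∈ T then 1 else 0) /
          Pieri.alt n (fun j : Fin n => n - 1 - (j : ℕ)) := by
    intro T hg
    unfold schur
    rw [if_pos (Pieri.gam_len_le hμ T hg)]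
    congr 1
    unfold Pieri.alt
    congr 1
    ext i j
    simp only [Matrix.of_apply]
    congr 1
    rw [Pieri.gam_part, Pieri.ind_fin]
    split_ifs <;> omega
  -- left-hand side
  rw [hs, ← mul_div_assoc, Pieri.esymm_mul_alt]
  rw [← Finset.sum_filter_of_ne (p := Pieri.good μ)
    (fun T _ hne => by_contra fun hbad => hne (Pieri.alt_eq_zero_of_bad hμ hbad))]
  rw [← hGdef, Finset.sum_div]
  -- right-hand side
  set t : Finset IntPartition := G.attach.image (fun T => Pieri.gam μ T.1 (hGmem T.1 T.2).1)
    with htdef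
  have hsupp : {γ | IntPartition.IsVerticalStrip μ γ r} ∩ Function.support (schur n)
      = ↑t ∩ Function.support (schur n) := by
    ext γ
    simp only [Set.mem_inter_iff, Set.mem_setOf_eq, Function.mem_support, Finset.mem_coe]
    constructor
    · rintro ⟨hγs, hne⟩
      refine ⟨?_, hne⟩
      have hlen : γ.len ≤ n := by
        by_contra hc
        exact hne (by unfold schur; rw [if_neg hc])
      obtain ⟨T, hg, hcard, heq⟩ := Pieri.strip_to_gam hμ hlen hγs
      have hTG : T ∈ G := by
        rw [hGdef, Finset.mem_filter, Finset.mem_powersetCard]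
        exact ⟨⟨Finset.subset_univ _, hcard⟩, hg⟩
      rw [htdef, Finset.mem_image]
      exact ⟨⟨T, hTG⟩, Finset.mem_attach _ _, heq.symm⟩
    · rintro ⟨hγt, hne⟩
      refine ⟨?_, hne⟩
      rw [htdef, Finset.mem_image] at hγt
      obtain ⟨T, -, rfl⟩ := hγt
      exact Pieri.gam_strip hμ T.1 (hGmem T.1 T.2).2 (hGmem T.1 T.2).1
  rw [finsum_mem_eq_sum_of_inter_support_eq (schur n) hsupp]
  rw [htdef, Finset.sum_image
    (fun x _ y _ h => Subtype.ext (Pieri.gam_inj h))]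
  rw [← Finset.sum_attach G (fun T =>
    Pieri.alt n (fun j => μ.part (j : ℕ) + (n - 1 - (j : ℕ)) + if j ∈ T then 1 else 0) /
      Pieri.alt n (fun j : Fin n => n - 1 - (j : ℕ)))]
  exact Finset.sum_congr rfl fun T _ => (hterm T.1 (hGmem T.1 T.2).1).symm
end
end

section
/- For any partition μ with at most n parts and any nonnegative integer r, h_r(x_1,...,x_n) · s_μ(x_1,...,x_n) = Σ_γ s_γ(x_1,...,x_n), where the sum is over all partitions γ ⊇ μ such that γ/μ is a horizontal strip with r boxes (at most one box in each column). -/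
open scoped BigOperators

noncomputable section

namespace PieriAux

open Finset Matrix Equiv

variable {n : ℕ}

lemma X_inj : Function.Injective (X (n := n)) := by
  intro i j h
  have h2 : (algebraMap (MvPolynomial (Fin n) ℚ) (K n)) (MvPolynomial.X i) =
      (algebraMap (MvPolynomial (Fin n) ℚ) (K n)) (MvPolynomial.X j) := h
  have := IsFractionRing.injective (MvPolynomial (Fin n) ℚ) (K n) h2
  exact MvPolynomial.X_injective this

/-- The alternant `det (x_i^{c_j})`. -/
def A (n : ℕ) (c : Fin n → ℕ) : K n := Matrix.det (Matrix.of fun i j : Fin n => X i ^ c j)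

lemma A_permute (c : Fin n → ℕ) (σ : Equiv.Perm (Fin n)) :
    A n (c ∘ σ) = (Equiv.Perm.sign σ : ℤ) * A n c := by
  have := Matrix.det_permute' σ (Matrix.of fun i j : Fin n => X i ^ c j)
  simpa [A, Matrix.submatrix] using this

lemma A_eq_zero {c : Fin n → ℕ} (h : ¬ Function.Injective c) : A n c = 0 := by
  simp only [Function.Injective, not_forall] at h
  obtain ⟨j, k, hjk, hne⟩ := h
  exact Matrix.det_zero_of_column_eq hne (fun i => by simp [Matrix.of_apply, hjk])

/-- The staircase exponent. -/
def delta (n : ℕ) : Fin n → ℕ := fun j => n - 1 - j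

lemma A_delta_ne_zero : A n (delta n) ≠ 0 := by
  have hv : Matrix.det (Matrix.vandermonde (X (n := n))) ≠ 0 := by
    rw [Matrix.det_vandermonde_ne_zero_iff]
    exact X_inj
  have hmat : (Matrix.of fun i j : Fin n => X i ^ delta n j)
      = (Matrix.vandermonde (X (n := n))).submatrix id Fin.revPerm := by
    ext i j
    simp [delta, Matrix.vandermonde]
    congr 1
    omega
  have : A n (delta n) = (Equiv.Perm.sign (Fin.revPerm : Equiv.Perm (Fin n)) : ℤ) *
      Matrix.det (Matrix.vandermonde (X (n := n))) := by
    rw [A, hmat, Matrix.det_permute']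
  rw [this]
  simp only [ne_eq, mul_eq_zero, not_or]
  refine ⟨by simp [Int.cast_eq_zero], hv⟩


lemma hsymm_eq (n r : ℕ) :
    hsymm n r = ∑ α ∈ Finset.Nat.antidiagonalTuple n r, ∏ i, X i ^ α i := by
  rw [hsymm]
  refine Finset.sum_bij (fun c _ => fun i => Multiset.count i c.1) ?_ ?_ ?_ ?_
  · intro c _
    rw [Finset.Nat.mem_antidiagonalTuple]
    have := c.2
    calc ∑ i, Multiset.count i c.1 = Multiset.card c.1 := by
          rw [← Multiset.toFinset_sum_count_eq c.1]
          refine (Finset.sum_subset (Finset.subset_univ _) ?_).symm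
          intro x _ hx
          simpa [Multiset.count_eq_zero] using hx
      _ = r := c.2
  · intro c _ c' _ h
    exact Sym.ext (Multiset.ext.mpr fun i => congrFun h i)
  · intro α hα
    rw [Finset.Nat.mem_antidiagonalTuple] at hα
    refine ⟨⟨∑ i, Multiset.replicate (α i) i, ?_⟩, Finset.mem_univ _, ?_⟩
    · simp [← hα]
    · funext i
      simp [Multiset.count_sum', Multiset.count_replicate]
  · intro c _
    rw [Finset.prod_multiset_map_count]
    refine Finset.prod_subset (Finset.subset_univ _) ?_
    intro x _ hx
    rw [Multiset.count_eq_zero_of_notMem (by simpa using hx), pow_zero]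

lemma mul_A (r : ℕ) (β : Fin n → ℕ) :
    hsymm n r * A n β = ∑ α ∈ Finset.Nat.antidiagonalTuple n r, A n (fun j => β j + α j) := by
  have inner : ∀ σ : Equiv.Perm (Fin n),
      ∑ α ∈ Finset.Nat.antidiagonalTuple n r, ∏ j, X (σ j) ^ α j = hsymm n r := by
    intro σ
    rw [hsymm_eq]
    refine Finset.sum_equiv (Equiv.arrowCongr σ (Equiv.refl ℕ)) ?_ ?_
    · intro α
      simp only [Finset.Nat.mem_antidiagonalTuple, Equiv.arrowCongr_apply, Function.comp,
        Equiv.refl_apply]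
      rw [Equiv.sum_comp σ.symm α]
    · intro α _
      refine ((Equiv.prod_comp σ fun i => X i ^ (α (σ.symm i))).symm.trans ?_).symm.trans ?_
      · exact Finset.prod_congr rfl fun j _ => by simp
      · exact Finset.prod_congr rfl fun j _ => by simp [Function.comp]
  have step1 : ∀ α : Fin n → ℕ, A n (fun j => β j + α j) =
      ∑ σ : Equiv.Perm (Fin n), ((Equiv.Perm.sign σ : ℤ) : K n) *
        ((∏ j, X (σ j) ^ β j) * ∏ j, X (σ j) ^ α j) := by
    intro α
    rw [A, Matrix.det_apply]
    refine Finset.sum_congr rfl fun σ _ => ?_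
    simp only [Units.smul_def, zsmul_eq_mul, Matrix.of_apply]
    congr 1
    rw [← Finset.prod_mul_distrib]
    exact Finset.prod_congr rfl fun j _ => by rw [pow_add]
  calc hsymm n r * A n β
      = ∑ σ : Equiv.Perm (Fin n), ((Equiv.Perm.sign σ : ℤ) : K n) *
          ((∏ j, X (σ j) ^ β j) * hsymm n r) := by
        rw [A, Matrix.det_apply, Finset.mul_sum]
        refine Finset.sum_congr rfl fun σ _ => ?_
        simp only [Units.smul_def, zsmul_eq_mul, Matrix.of_apply]
        ring
    _ = ∑ σ : Equiv.Perm (Fin n), ∑ α ∈ Finset.Nat.antidiagonalTuple n r,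
          ((Equiv.Perm.sign σ : ℤ) : K n) *
            ((∏ j, X (σ j) ^ β j) * ∏ j, X (σ j) ^ α j) := by
        refine Finset.sum_congr rfl fun σ _ => ?_
        rw [← inner σ, Finset.mul_sum, Finset.mul_sum]
    _ = ∑ α ∈ Finset.Nat.antidiagonalTuple n r, A n (fun j => β j + α j) := by
        rw [Finset.sum_comm]
        exact Finset.sum_congr rfl fun α _ => (step1 α).symm

/-- strictly antitone (as a decidable predicate). -/
def SA (l : Fin n → ℕ) : Prop := ∀ j k : Fin n, (j : ℕ) < (k : ℕ) → l k < l j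

/-- interlacing below β. -/
def Itl (β l : Fin n → ℕ) : Prop := ∀ j k : Fin n, (j : ℕ) < (k : ℕ) → l k < β j

instance (l : Fin n → ℕ) : Decidable (SA l) := by unfold SA; infer_instance
instance (β l : Fin n → ℕ) : Decidable (Itl β l) := by unfold Itl; infer_instance

/-- The 0-1 staircase matrix. -/
def B (β l : Fin n → ℕ) : Matrix (Fin n) (Fin n) (K n) :=
  Matrix.of fun k j => if β j ≤ l k then 1 else 0

/-- The permutations compatible with `β ≤ l∘σ`. -/
def P (β l : Fin n → ℕ) : Finset (Equiv.Perm (Fin n)) :=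
  Finset.univ.filter (fun σ => ∀ j, β j ≤ l (σ j))

lemma detB_eq (β l : Fin n → ℕ) :
    (B β l).det = ∑ σ ∈ P β l, ((Equiv.Perm.sign σ : ℤ) : K n) := by
  rw [Matrix.det_apply]
  rw [show (∑ σ : Equiv.Perm (Fin n), Equiv.Perm.sign σ • ∏ j, B β l (σ j) j)
      = ∑ σ : Equiv.Perm (Fin n),
        (if ∀ j, β j ≤ l (σ j) then ((Equiv.Perm.sign σ : ℤ) : K n) else 0) from ?_]
  · rw [P, ← Finset.sum_filter]
  · refine Finset.sum_congr rfl fun σ _ => ?_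
    have : (∏ j, B β l (σ j) j) = if ∀ j, β j ≤ l (σ j) then (1 : K n) else 0 := by
      simp only [B, Matrix.of_apply]
      rw [Finset.prod_boole]
      congr 1
      · simp
    rw [this, Units.smul_def, zsmul_eq_mul]
    split <;> simp

lemma detB_one {β l : Fin n → ℕ} (hle : ∀ j, β j ≤ l j) (hitl : Itl β l) :
    (B β l).det = 1 := by
  have htri : (B β l).BlockTriangular id := by
    intro k j hjk
    simp only [B, Matrix.of_apply, if_neg (not_le.mpr (hitl j k hjk))]
  rw [Matrix.det_of_upperTriangular htri]
  refine Finset.prod_eq_one fun k _ => ?_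
  simp [B, hle k]

lemma detB_zero {β l : Fin n → ℕ} (hβ : SA β) (hl : SA l) (hle : ∀ j, β j ≤ l j)
    (hitl : ¬ Itl β l) : (B β l).det = 0 := by
  classical
  -- the set of "bad" rows
  set S : Finset (Fin n) := Finset.univ.filter
    (fun j : Fin n => ∃ k : Fin n, (j : ℕ) < (k : ℕ) ∧ β j ≤ l k) with hS
  have hSne : S.Nonempty := by
    simp only [Itl, not_forall, not_lt] at hitl
    obtain ⟨j, k, hjk, hge⟩ := hitl
    exact ⟨j, by simp [hS]; exact ⟨k, hjk, hge⟩⟩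
  set j0 := S.min' hSne with hj0
  have hj0S : j0 ∈ S := S.min'_mem hSne
  simp only [hS, Finset.mem_filter] at hj0S
  obtain ⟨-, k, hk, hkle⟩ := hj0S
  have hj1 : (j0 : ℕ) + 1 < n := lt_of_le_of_lt hk k.isLt
  set k0 : Fin n := ⟨(j0 : ℕ) + 1, hj1⟩ with hk0
  have hne : j0 ≠ k0 := by
    intro h
    have := congrArg Fin.val h
    simp [hk0] at this
  -- rows j0 and k0 of B are equal
  refine Matrix.det_zero_of_row_eq hne ?_
  funext j
  simp only [B, Matrix.of_apply]
  have hlk0 : β j0 ≤ l k0 := by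
    have hck : (k0 : ℕ) ≤ (k : ℕ) := hk
    rcases eq_or_lt_of_le hck with h' | h'
    · rw [show k0 = k from Fin.ext h']
      exact hkle
    · exact le_trans hkle (le_of_lt (hl k0 k h'))
  by_cases hj : β j ≤ l j0
  · rw [if_pos hj]
    -- show β j ≤ l k0
    rcases Nat.lt_or_ge (j : ℕ) (j0 : ℕ) with h | h
    · -- j < j0 contradicts minimality
      exfalso
      have hjS : j ∈ S := by
        simp only [hS, Finset.mem_filter]
        exact ⟨Finset.mem_univ _, j0, h, hj⟩
      have := S.min'_le j hjS
      rw [← hj0] at this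
      exact absurd (lt_of_le_of_lt this (by exact_mod_cast h)) (lt_irrefl _)
    · rw [if_pos]
      rcases Nat.eq_or_lt_of_le h with h' | h'
      · rw [show j = j0 from Fin.ext h'.symm] at hj ⊢
        exact hlk0
      · exact le_trans (le_of_lt (hβ j0 j h')) hlk0
  · rw [if_neg hj, if_neg]
    intro hcon
    exact hj (le_trans hcon (le_of_lt (hl j0 k0 (by simp [hk0]))))

lemma SA_inj {l : Fin n → ℕ} (h : SA l) : Function.Injective l := by
  intro a b hab
  by_contra hne
  rcases Nat.lt_or_ge (a : ℕ) (b : ℕ) with hh | hh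
  · exact absurd hab (Nat.ne_of_gt (h a b hh))
  · rcases eq_or_lt_of_le hh with h' | h'
    · exact hne (Fin.ext h'.symm)
    · exact absurd hab.symm (Nat.ne_of_gt (h b a h'))

/-- Sorting an injective tuple into a strictly antitone one. -/
lemma exists_sort (c : Fin n → ℕ) (hc : Function.Injective c) :
    ∃ (l : Fin n → ℕ) (σ : Equiv.Perm (Fin n)), SA l ∧ c = l ∘ σ := by
  classical
  set τ := Tuple.sort c with hτ
  have hmono : Monotone (c ∘ τ) := Tuple.monotone_sort c
  have hsm : StrictMono (c ∘ τ) := by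
    intro a b hab
    rcases lt_or_eq_of_le (hmono (le_of_lt hab)) with h | h
    · exact h
    · exact absurd (τ.injective (hc h)) (ne_of_lt hab)
  refine ⟨(c ∘ τ) ∘ Fin.rev, (τ⁻¹).trans Fin.revPerm, ?_, ?_⟩
  · intro j k hjk
    exact hsm (by rwa [Fin.rev_lt_rev, ← Fin.lt_iff_val_lt_val] at *)
  · funext x
    simp [Function.comp, Fin.rev_rev]

lemma SA_sorted_unique {l l' : Fin n → ℕ} (hl : SA l) (hl' : SA l') (π : Equiv.Perm (Fin n))
    (h : l = l' ∘ π) : l = l' := by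
  have hπ : StrictMono (π : Fin n → Fin n) := by
    intro a b hab
    have h1 : l b < l a := hl a b hab
    rw [h] at h1
    by_contra hge
    rcases eq_or_lt_of_le (not_lt.mp hge) with h' | h'
    · simp only [Function.comp] at h1; rw [h'] at h1; omega
    · exact absurd (hl' (π b) (π a) h') (not_lt.mpr (le_of_lt h1))
  haveI hwf : WellFoundedLT (Fin n) := inferInstance
  have : (π : Fin n → Fin n) = id := by
    have h2 : StrictMono (id : Fin n → Fin n) := strictMono_id
    have h3 : Set.range (π : Fin n → Fin n) = Set.range (id : Fin n → Fin n) := by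
      rw [Set.range_id]
      exact Set.eq_univ_of_forall fun x => ⟨π.symm x, by simp⟩
    exact (@StrictMono.range_inj (Fin n) (Fin n) _ _ _ _ _ hπ h2).1 h3
  rw [h, this]
  rfl

/-- The finset of exponents `β + α`, `|α| = r`. -/
def T (β : Fin n → ℕ) (r : ℕ) : Finset (Fin n → ℕ) :=
  (Finset.Nat.antidiagonalTuple n r).image (fun α j => β j + α j)

lemma mem_T {β : Fin n → ℕ} {r : ℕ} {c : Fin n → ℕ} :
    c ∈ T β r ↔ (∀ j, β j ≤ c j) ∧ ∑ j, c j = (∑ j, β j) + r := by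
  constructor
  · intro h
    obtain ⟨α, hα, rfl⟩ := Finset.mem_image.mp h
    rw [Finset.Nat.mem_antidiagonalTuple] at hα
    exact ⟨fun j => Nat.le_add_right _ _, by rw [Finset.sum_add_distrib, hα]⟩
  · rintro ⟨h1, h2⟩
    refine Finset.mem_image.mpr ⟨fun j => c j - β j, ?_, ?_⟩
    · rw [Finset.Nat.mem_antidiagonalTuple]
      have h3 : ∑ j, (c j - β j) + ∑ j, β j = ∑ j, c j := by
        rw [← Finset.sum_add_distrib]
        exact Finset.sum_congr rfl fun j _ => by have := h1 j; omega
      omega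
    · funext j
      exact Nat.add_sub_cancel' (h1 j)

lemma sum_T (β : Fin n → ℕ) (r : ℕ) :
    ∑ α ∈ Finset.Nat.antidiagonalTuple n r, A n (fun j => β j + α j) =
      ∑ c ∈ T β r, A n c := by
  rw [T, Finset.sum_image]
  intro α _ α' _ h
  funext j
  have : β j + α j = β j + α' j := congrFun h j
  omega

lemma sorted_ge {β c l : Fin n → ℕ} {σ : Equiv.Perm (Fin n)} (hβ : SA β)
    (hc : ∀ j, β j ≤ c j) (hl : SA l) (hcl : c = l ∘ σ) : ∀ j, β j ≤ l j := by
  intro j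
  by_contra hlt
  push_neg at hlt
  have hmap : ∀ i : Fin n, j ≤ i → σ⁻¹ i ∈ Finset.Ioi j := by
    intro i hij
    have hli : l i ≤ l j := by
      rcases eq_or_lt_of_le hij with h' | h'
      · rw [← h']
      · exact le_of_lt (hl j i h')
    have hci : c (σ⁻¹ i) = l i := by
      rw [hcl]; simp
    have hβi : β (σ⁻¹ i) < β j := lt_of_le_of_lt (hci ▸ hc (σ⁻¹ i)) (lt_of_le_of_lt hli hlt)
    rw [Finset.mem_Ioi]
    by_contra hle
    push_neg at hle
    rcases eq_or_lt_of_le (show ((σ⁻¹ i : Fin n) : ℕ) ≤ (j : ℕ) from hle) with h' | h'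
    · rw [show (σ⁻¹ i : Fin n) = j from Fin.ext h'] at hβi; omega
    · exact absurd (hβ _ _ h') (not_lt.mpr (le_of_lt hβi))
  have hcard := Finset.card_le_card_of_injOn (fun i => σ⁻¹ i)
    (fun i hi => hmap i (Finset.mem_Ici.mp hi))
    (fun a _ b _ h => (σ⁻¹).injective h)
  rw [Fin.card_Ici, Fin.card_Ioi] at hcard
  have := j.isLt
  omega

lemma key2 {β : Fin n → ℕ} (hβ : SA β) (r : ℕ) :
    ∑ c ∈ T β r, A n c = ∑ l ∈ (T β r).filter (fun l => Itl β l), A n l := by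
  classical
  -- restrict to injective tuples
  rw [← Finset.sum_filter_of_ne (p := fun c => Function.Injective c)
    (fun c _ hne => by by_contra h; exact hne (A_eq_zero h))]
  set D := (T β r).filter (fun l => SA l) with hD
  -- bijection between pairs and injective tuples
  have hbij : ∑ x ∈ D.sigma (fun l => P β l),
      (((Equiv.Perm.sign x.2 : ℤ) : K n) * A n x.1)
      = ∑ c ∈ (T β r).filter (fun c => Function.Injective c), A n c := by
    refine Finset.sum_bij (fun x _ => x.1 ∘ x.2) ?_ ?_ ?_ ?_
    · rintro ⟨l, σ⟩ hx
      rw [Finset.mem_sigma] at hx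
      obtain ⟨hlD, hσ⟩ := hx
      rw [hD, Finset.mem_filter] at hlD
      obtain ⟨hlT, hlSA⟩ := hlD
      rw [P, Finset.mem_filter] at hσ
      rw [Finset.mem_filter]
      constructor
      · rw [mem_T]
        rw [mem_T] at hlT
        exact ⟨fun j => hσ.2 j, by
          rw [show (∑ j, (l ∘ σ) j) = ∑ j, l j from Equiv.sum_comp σ l]
          exact hlT.2⟩
      · exact (SA_inj hlSA).comp σ.injective
    · rintro ⟨l, σ⟩ hx ⟨l', σ'⟩ hx' heq
      rw [Finset.mem_sigma, hD, Finset.mem_filter] at hx hx'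
      have hll' : l = l' := by
        refine SA_sorted_unique hx.1.2 hx'.1.2 (σ.symm.trans σ') ?_
        funext x
        have h5 := congrFun heq (σ.symm x)
        simpa using h5
      subst hll'
      have hσσ' : σ = σ' := by
        ext x
        exact congrArg Fin.val (SA_inj hx.1.2 (congrFun heq x))
      subst hσσ'
      rfl
    · intro c hc
      rw [Finset.mem_filter] at hc
      obtain ⟨hcT, hcinj⟩ := hc
      obtain ⟨l, σ, hlSA, hcl⟩ := exists_sort c hcinj
      rw [mem_T] at hcT
      refine ⟨⟨l, σ⟩, ?_, hcl.symm⟩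
      rw [Finset.mem_sigma, hD, Finset.mem_filter, mem_T, P, Finset.mem_filter]
      refine ⟨⟨⟨sorted_ge hβ hcT.1 hlSA hcl, ?_⟩, hlSA⟩, Finset.mem_univ _, ?_⟩
      · rw [← hcT.2, ← show (∑ j, (l ∘ σ) j) = ∑ j, l j from Equiv.sum_comp σ l, ← hcl]
      · intro j
        have := hcT.1 j
        rw [hcl] at this
        exact this
    · rintro ⟨l, σ⟩ _
      exact (A_permute l σ).symm
  rw [← hbij, Finset.sum_sigma]
  have hstep : ∀ l ∈ D, (∑ σ ∈ P β l, (((Equiv.Perm.sign σ : ℤ) : K n) * A n l))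
      = (if Itl β l then (1 : K n) else 0) * A n l := by
    intro l hl
    rw [hD, Finset.mem_filter, mem_T] at hl
    rw [← Finset.sum_mul, ← detB_eq]
    congr 1
    by_cases hitl : Itl β l
    · rw [detB_one hl.1.1 hitl, if_pos hitl]
    · rw [detB_zero hβ hl.2 hl.1.1 hitl, if_neg hitl]
  rw [Finset.sum_congr rfl hstep]
  rw [show ∀ (s : Finset (Fin n → ℕ)), (∑ l ∈ s, (if Itl β l then (1:K n) else 0) * A n l)
      = ∑ l ∈ s.filter (fun l => Itl β l), A n l from fun s => by
    rw [Finset.sum_filter]; exact Finset.sum_congr rfl fun l _ => by split <;> simp]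
  rw [hD, Finset.filter_filter]
  congr 1
  apply Finset.filter_congr
  intro c hcT
  rw [mem_T] at hcT
  constructor
  · intro h; exact h.2
  · intro h
    refine ⟨fun j k hjk => lt_of_lt_of_le (h j k hjk) (hcT.1 j), h⟩

/-! ### IntPartition bridge -/

lemma IntPartition.ext' {μ ν : IntPartition} (h : μ.part = ν.part) : μ = ν := by
  cases μ; cases ν; cases h; rfl

lemma part_eq_zero {μ : IntPartition} {i : ℕ} (h : μ.len ≤ i) : μ.part i = 0 := by
  have h0 : μ.part μ.len = 0 := Nat.find_spec (p := fun N => μ.part N = 0) _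
  exact Nat.le_zero.mp (h0 ▸ μ.antitone _ _ h)

lemma len_le {μ : IntPartition} {N : ℕ} (h : μ.part N = 0) : μ.len ≤ N :=
  Nat.find_min' _ h

lemma size_eq_sum_range {μ : IntPartition} (h : μ.len ≤ n) :
    μ.size = ∑ i ∈ Finset.range n, μ.part i := by
  rw [IntPartition.size]
  refine Finset.sum_subset (Finset.range_subset_range.mpr h) fun i _ hi => ?_
  exact part_eq_zero (by simpa using hi)

/-- The exponent vector of a partition. -/
def bex (n : ℕ) (μ : IntPartition) : Fin n → ℕ := fun j => μ.part j + (n - 1 - (j : ℕ))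

lemma SA_bex (μ : IntPartition) : SA (bex n μ) := by
  intro j k hjk
  have h1 := μ.antitone j k (le_of_lt hjk)
  have h2 := k.isLt
  simp only [bex]
  omega

lemma schur_eq {μ : IntPartition} (h : μ.len ≤ n) :
    schur n μ = A n (bex n μ) / A n (delta n) := by
  rw [schur, if_pos h]
  rfl

/-- From an exponent vector to a partition (with a junk value). -/
def Φ (μ : IntPartition) (l : Fin n → ℕ) : IntPartition :=
  if hl : (∀ j, bex n μ j ≤ l j) ∧ Itl (bex n μ) l then
    { part := fun i => if h : i < n then l ⟨i, h⟩ - (n - 1 - i) else 0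
      antitone := by
        have key : ∀ i : ℕ, (fun i => if h : i < n then l ⟨i, h⟩ - (n - 1 - i) else 0) (i+1) ≤
            (fun i => if h : i < n then l ⟨i, h⟩ - (n - 1 - i) else 0) i := by
          intro i
          simp only
          by_cases h1 : i + 1 < n
          · have h0 : i < n := by omega
            rw [dif_pos h1, dif_pos h0]
            have hit : l ⟨i+1, h1⟩ < bex n μ ⟨i, h0⟩ := hl.2 ⟨i, h0⟩ ⟨i+1, h1⟩ (by simp)
            have hge : bex n μ ⟨i, h0⟩ ≤ l ⟨i, h0⟩ := hl.1 ⟨i, h0⟩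
            simp only [bex] at hit hge
            omega
          · rw [dif_neg h1]
            omega
        intro i j hij
        induction j with
        | zero => simp_all
        | succ m ih =>
          rcases Nat.lt_or_ge i (m+1) with h' | h'
          · exact le_trans (key m) (ih (by omega))
          · have : i = m + 1 := by omega
            subst this
            exact le_rfl
      finite := ⟨n, fun i hi => by simp [dif_neg (not_lt.mpr hi)]⟩ }
  else ⟨fun _ => 0, fun _ _ _ => le_rfl, ⟨0, fun _ _ => rfl⟩⟩

lemma Φ_part {μ : IntPartition} {l : Fin n → ℕ}
    (h1 : ∀ j, bex n μ j ≤ l j) (h2 : Itl (bex n μ) l) (i : ℕ) :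
    (Φ μ l).part i = if h : i < n then l ⟨i, h⟩ - (n - 1 - i) else 0 := by
  rw [Φ, dif_pos ⟨h1, h2⟩]

lemma Φ_len {μ : IntPartition} {l : Fin n → ℕ}
    (h1 : ∀ j, bex n μ j ≤ l j) (h2 : Itl (bex n μ) l) : (Φ μ l).len ≤ n :=
  len_le (by rw [Φ_part h1 h2, dif_neg (lt_irrefl n)])

lemma Φ_bex {μ : IntPartition} {l : Fin n → ℕ}
    (h1 : ∀ j, bex n μ j ≤ l j) (h2 : Itl (bex n μ) l) :
    bex n (Φ μ l) = l := by
  funext j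
  have hb := h1 j
  simp only [bex] at hb ⊢
  rw [Φ_part h1 h2, dif_pos j.isLt]
  have : (⟨(j : ℕ), j.isLt⟩ : Fin n) = j := rfl
  rw [this]
  omega

lemma schur_Φ {μ : IntPartition} {l : Fin n → ℕ}
    (h1 : ∀ j, bex n μ j ≤ l j) (h2 : Itl (bex n μ) l) :
    schur n (Φ μ l) = A n l / A n (delta n) := by
  rw [schur_eq (Φ_len h1 h2), Φ_bex h1 h2]

def dsum (n : ℕ) : ℕ := ∑ j : Fin n, (n - 1 - (j : ℕ))

lemma sum_bex {μ : IntPartition} (h : μ.len ≤ n) :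
    ∑ j, bex n μ j = μ.size + dsum n := by
  simp only [bex, dsum]
  rw [size_eq_sum_range h, Finset.sum_add_distrib, ← Fin.sum_univ_eq_sum_range]

lemma size_mono {μ γ : IntPartition} (hμ : μ.len ≤ n) (hγ : γ.len ≤ n) (h : μ ≤ γ) :
    μ.size ≤ γ.size := by
  rw [size_eq_sum_range hμ, size_eq_sum_range (n := n) hγ]
  exact Finset.sum_le_sum fun i _ => h i

lemma Φ_strip {μ : IntPartition} (hμ : μ.len ≤ n) {l : Fin n → ℕ} {r : ℕ}
    (h1 : ∀ j, bex n μ j ≤ l j) (h2 : Itl (bex n μ) l)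
    (h3 : ∑ j, l j = (∑ j, bex n μ j) + r) :
    IntPartition.IsHorizontalStrip μ (Φ μ l) r := by
  have hle : μ ≤ Φ μ l := by
    intro i
    rw [Φ_part h1 h2]
    by_cases h : i < n
    · rw [dif_pos h]
      have := h1 ⟨i, h⟩
      simp only [bex] at this
      omega
    · rw [dif_neg h, part_eq_zero (le_trans hμ (not_lt.mp h))]
  have hsize : (Φ μ l).size = μ.size + r := by
    have e1 : ∑ j, bex n (Φ μ l) j = (Φ μ l).size + dsum n := sum_bex (Φ_len h1 h2)
    rw [Φ_bex h1 h2] at e1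
    have e2 : ∑ j, bex n μ j = μ.size + dsum n := sum_bex hμ
    omega
  refine ⟨hle, ?_, ?_⟩
  · rw [IntPartition.skewSize, hsize]
    omega
  · intro i
    rw [Φ_part h1 h2]
    by_cases h : i + 1 < n
    · rw [dif_pos h]
      have hi : i < n := by omega
      have hit := h2 ⟨i, hi⟩ ⟨i+1, h⟩ (by simp)
      simp only [bex] at hit
      omega
    · rw [dif_neg h]
      exact Nat.zero_le _

lemma strip_rep {μ γ : IntPartition} (hμ : μ.len ≤ n) (hγ : γ.len ≤ n) {r : ℕ}
    (h : IntPartition.IsHorizontalStrip μ γ r) :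
    (∀ j, bex n μ j ≤ bex n γ j) ∧ Itl (bex n μ) (bex n γ) ∧
      (∑ j, bex n γ j = (∑ j, bex n μ j) + r) ∧ Φ μ (bex n γ) = γ := by
  obtain ⟨hle, hsz, hhs⟩ := h
  have h1 : ∀ j : Fin n, bex n μ j ≤ bex n γ j := by
    intro j
    simp only [bex]
    have := hle j
    omega
  have h2 : Itl (bex n μ) (bex n γ) := by
    intro j k hjk
    have ha : γ.part k ≤ γ.part ((j : ℕ) + 1) := γ.antitone _ _ (by omega)
    have hb := hhs (j : ℕ)
    have hk := k.isLt
    simp only [bex]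
    omega
  have h3 : ∑ j, bex n γ j = (∑ j, bex n μ j) + r := by
    have e1 : ∑ j, bex n γ j = γ.size + dsum n := sum_bex hγ
    have e2 : ∑ j, bex n μ j = μ.size + dsum n := sum_bex hμ
    have e3 : μ.size ≤ γ.size := size_mono hμ hγ hle
    rw [IntPartition.skewSize] at hsz
    omega
  refine ⟨h1, h2, h3, ?_⟩
  apply IntPartition.ext'
  funext i
  rw [Φ_part h1 h2]
  by_cases hi : i < n
  · rw [dif_pos hi]
    simp only [bex]
    omega
  · rw [dif_neg hi]
    exact (part_eq_zero (le_trans hγ (not_lt.mp hi))).symm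

lemma schur_eq_zero {γ : IntPartition} (h : ¬ γ.len ≤ n) : schur n γ = 0 := by
  rw [schur, if_neg h]

end PieriAux

/-- Pieri's rule: `h_r · s_μ = Σ_{γ/μ ∈ HS(r)} s_γ`. -/
theorem pieri_hsymm (n r : ℕ) (μ : IntPartition) (hμ : μ.len ≤ n) :
    hsymm n r * schur n μ =
      ∑ᶠ γ ∈ {γ | IntPartition.IsHorizontalStrip μ γ r}, schur n γ := by
  classical
  set β := PieriAux.bex n μ with hβdef
  have hSA : PieriAux.SA β := PieriAux.SA_bex μ
  set L := (PieriAux.T β r).filter (fun l => PieriAux.Itl β l) with hLdef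
  have mem_L : ∀ l : Fin n → ℕ, l ∈ L ↔
      ((∀ j, β j ≤ l j) ∧ PieriAux.Itl β l ∧ ∑ j, l j = (∑ j, β j) + r) := by
    intro l
    rw [hLdef, Finset.mem_filter, PieriAux.mem_T]
    tauto
  -- left-hand side
  have lhs : hsymm n r * schur n μ =
      ∑ l ∈ L, PieriAux.A n l / PieriAux.A n (PieriAux.delta n) := by
    rw [PieriAux.schur_eq hμ, div_eq_mul_inv, ← mul_assoc, PieriAux.mul_A,
      PieriAux.sum_T, PieriAux.key2 hSA, Finset.sum_mul]
    exact Finset.sum_congr rfl fun l _ => (div_eq_mul_inv _ _).symm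
  -- right-hand side
  have hset : {γ | IntPartition.IsHorizontalStrip μ γ r} ∩ Function.support (schur n)
      = ↑(L.image (PieriAux.Φ μ)) ∩ Function.support (schur n) := by
    ext γ
    simp only [Set.mem_inter_iff, Set.mem_setOf_eq, Finset.coe_image, Set.mem_image,
      Finset.mem_coe, Function.mem_support]
    constructor
    · rintro ⟨hγS, hγsupp⟩
      have hγn : γ.len ≤ n := by
        by_contra h
        exact hγsupp (PieriAux.schur_eq_zero h)
      obtain ⟨h1, h2, h3, h4⟩ := PieriAux.strip_rep hμ hγn hγS
      refine ⟨⟨PieriAux.bex n γ, ?_, h4⟩, hγsupp⟩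
      rw [mem_L]
      exact ⟨h1, h2, h3⟩
    · rintro ⟨⟨l, hlL, rfl⟩, hsupp⟩
      rw [mem_L] at hlL
      exact ⟨PieriAux.Φ_strip hμ hlL.1 hlL.2.1 hlL.2.2, hsupp⟩
  have rhs : ∑ᶠ γ ∈ {γ | IntPartition.IsHorizontalStrip μ γ r}, schur n γ
      = ∑ l ∈ L, PieriAux.A n l / PieriAux.A n (PieriAux.delta n) := by
    rw [finsum_mem_inter_support_eq (schur n) _ _ hset, finsum_mem_coe_finset,
      Finset.sum_image ?hinj]
    case hinj =>
      intro l hl l' hl' heq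
      rw [Finset.mem_coe, mem_L] at hl hl'
      have e1 := PieriAux.Φ_bex hl.1 hl.2.1
      have e2 := PieriAux.Φ_bex hl'.1 hl'.2.1
      rw [← e1, ← e2, heq]
    refine Finset.sum_congr rfl fun l hl => ?_
    rw [mem_L] at hl
    exact PieriAux.schur_Φ hl.1 hl.2.1
  rw [lhs, rhs]
end
end
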